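/- arXiv:math/0605251 — 7 statements merged into one kernel-verified Lean document; each statement's English description precedes it below -/
import Mathlib

section
/- Let μ be a probability measure on [0,∞) and define h(s) = ∫₀^∞ s/(s² + u²) dμ(u) for s > 0. Then for all s > 0, h(s) ≤ 1/s, and h is differentiable with h'(s) ≤ h(s)/s − 2·h(s)². -/
open MeasureTheory Set

theorem stmt2 (μ : Measure ℝ) [IsProbabilityMeasure μ] (hμ : μ (Iio 0) = 0)
    (h : ℝ → ℝ) (hdef : ∀ s : ℝ, h s = ∫ u, s / (s ^ 2 + u ^ 2) ∂μ)
    (s : ℝ) (hs : 0 < s) :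
    h s ≤ 1 / s ∧ ∃ d : ℝ, HasDerivAt h d s ∧ d ≤ h s / s - 2 * h s ^ 2 := by
  have hpos : ∀ (x u : ℝ), 0 < x → 0 < x ^ 2 + u ^ 2 := fun x u hx =>
    add_pos_of_pos_of_nonneg (pow_pos hx 2) (sq_nonneg u)
  set g : ℝ → ℝ := fun u => s / (s ^ 2 + u ^ 2) with hg
  have hgcont : Continuous g := by
    apply continuous_const.div (by continuity)
    exact fun u => (hpos s u hs).ne'
  have hgmeas : AEStronglyMeasurable g μ := hgcont.aestronglyMeasurable
  have hgle : ∀ u, g u ≤ 1 / s := by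
    intro u
    rw [hg]
    rw [div_le_div_iff₀ (hpos s u hs) hs]
    nlinarith [sq_nonneg u]
  have hgnonneg : ∀ u, 0 ≤ g u := fun u => le_of_lt (div_pos hs (hpos s u hs))
  have hgint : Integrable g μ := by
    apply Integrable.mono' (integrable_const (1/s)) hgmeas
    filter_upwards with u
    rw [Real.norm_eq_abs, abs_of_nonneg (hgnonneg u)]
    exact hgle u
  have hg2int : Integrable (fun u => g u ^ 2) μ := by
    apply Integrable.mono' (integrable_const ((1/s)^2)) ((hgcont.pow 2).aestronglyMeasurable)
    filter_upwards with u
    rw [Real.norm_eq_abs, abs_of_nonneg (sq_nonneg _)]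
    exact pow_le_pow_left₀ (hgnonneg u) (hgle u) 2
  have h1 : h s ≤ 1 / s := by
    rw [hdef]
    calc ∫ u, s / (s ^ 2 + u ^ 2) ∂μ ≤ ∫ _, 1/s ∂μ :=
          integral_mono hgint (integrable_const _) hgle
    _ = 1/s := by simp
  refine ⟨h1, ?_⟩
  -- derivative under the integral sign
  have key := hasDerivAt_integral_of_dominated_loc_of_deriv_le
    (F := fun (x : ℝ) (u : ℝ) => x / (x ^ 2 + u ^ 2))
    (F' := fun (x : ℝ) (u : ℝ) => (u ^ 2 - x ^ 2) / (x ^ 2 + u ^ 2) ^ 2)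
    (μ := μ) (x₀ := s) (bound := fun _ => 4 / s ^ 2) (s := Metric.ball s (s/2)) (Metric.ball_mem_nhds s (half_pos hs))
    ?_ ?_ ?_ ?_ ?_ ?_
  rotate_left
  · filter_upwards with x
    exact (measurable_const.div
      ((measurable_id.pow_const 2).const_add (x ^ 2))).aestronglyMeasurable
  · exact hgint
  · exact (((measurable_id.pow_const 2).sub_const (s ^ 2)).div
      (((measurable_id.pow_const 2).const_add (s ^ 2)).pow_const 2)).aestronglyMeasurable
  · filter_upwards with u x hx
    have hx1 : |x - s| < s / 2 := by simpa [Real.dist_eq] using hx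
    have hx2 : s / 2 < x := by cases abs_lt.mp hx1; linarith
    have hxpos : 0 < x := by linarith
    have hd : (0:ℝ) < x ^ 2 + u ^ 2 := hpos x u hxpos
    rw [Real.norm_eq_abs, abs_div, abs_of_nonneg (le_of_lt (pow_pos hd 2)),
      div_le_div_iff₀ (pow_pos hd 2) (pow_pos hs 2)]
    have h4 : s ^ 2 ≤ 4 * x ^ 2 := by nlinarith
    have habs : |u ^ 2 - x ^ 2| ≤ x ^ 2 + u ^ 2 := by
      rw [abs_le]; constructor <;> nlinarith [sq_nonneg u, sq_nonneg x]
    calc |u ^ 2 - x ^ 2| * s ^ 2 ≤ (x ^ 2 + u ^ 2) * (4 * x ^ 2) :=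
          mul_le_mul habs h4 (sq_nonneg s) hd.le
      _ ≤ 4 * (x ^ 2 + u ^ 2) ^ 2 := by nlinarith [mul_nonneg hd.le (sq_nonneg u)]
  · exact integrable_const _
  · filter_upwards with u x hx
    have hx1 : |x - s| < s / 2 := by simpa [Real.dist_eq] using hx
    have hx2 : s / 2 < x := by cases abs_lt.mp hx1; linarith
    have hxpos : 0 < x := by linarith
    have hd : (0:ℝ) < x ^ 2 + u ^ 2 := hpos x u hxpos
    have hden : HasDerivAt (fun x : ℝ => x ^ 2 + u ^ 2) (2 * x) x := by
      simpa using (hasDerivAt_pow 2 x).add_const (u ^ 2)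
    have := (hasDerivAt_id x).div hden hd.ne'
    convert this using 1
    · rfl
    · rfl
    simp only [id]
    ring
  obtain ⟨hF'int, hder⟩ := key
  have hheq : h = fun x => ∫ u, x / (x ^ 2 + u ^ 2) ∂μ := funext hdef
  refine ⟨_, hheq ▸ hder, ?_⟩
  -- pointwise identity
  have hid : ∀ u : ℝ, (u ^ 2 - s ^ 2) / (s ^ 2 + u ^ 2) ^ 2 = g u / s - 2 * g u ^ 2 := by
    intro u
    have hne := (hpos s u hs).ne'
    rw [hg]
    field_simp
    ring
  have heq : ∫ u, (u ^ 2 - s ^ 2) / (s ^ 2 + u ^ 2) ^ 2 ∂μ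
      = (∫ u, g u ∂μ) / s - 2 * ∫ u, g u ^ 2 ∂μ := by
    simp only [hid]
    rw [integral_sub (hgint.div_const s) (hg2int.const_mul 2), integral_div,
      integral_const_mul]
  -- Cauchy–Schwarz / variance
  have hcs : (∫ u, g u ∂μ) ^ 2 ≤ ∫ u, g u ^ 2 ∂μ := by
    set c := ∫ u, g u ∂μ with hc
    have hnn : 0 ≤ ∫ u, (g u - c) ^ 2 ∂μ := integral_nonneg fun u => sq_nonneg _
    have e1 : ∀ u, (g u - c) ^ 2 = g u ^ 2 - (2 * c) * g u + c ^ 2 := fun u => by ring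
    have hcalc : ∫ u, (g u - c) ^ 2 ∂μ = (∫ u, g u ^ 2 ∂μ) - c ^ 2 := by
      simp only [e1]
      have i1 : Integrable (fun u => g u ^ 2 - 2 * c * g u) μ := hg2int.sub (hgint.const_mul _)
      rw [integral_add i1 (integrable_const _),
        integral_sub hg2int (hgint.const_mul _), integral_const_mul, integral_const]
      simp [← hc]
      ring
    rw [hcalc] at hnn
    linarith
  have hhs : h s = ∫ u, g u ∂μ := hdef s
  rw [heq, hhs]
  have : 0 ≤ (∫ u, g u ^ 2 ∂μ) - (∫ u, g u ∂μ) ^ 2 := by linarith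
  linarith
end

section
/- Let μ be a probability measure on [0,∞) which is not a Dirac measure, and define h(s) = ∫₀^∞ s/(s² + u²) dμ(u). Then for all s > 0 one has 0 < h(s) < 1/s and h'(s) < h(s)/s − 2·h(s)². -/
open MeasureTheory Set

set_option maxHeartbeats 1000000 in
theorem stmt3 (μ : Measure ℝ) [IsProbabilityMeasure μ] (hμ : μ (Iio 0) = 0)
    (hnd : ∀ c : ℝ, μ ≠ Measure.dirac c)
    (h : ℝ → ℝ) (hdef : ∀ s : ℝ, h s = ∫ u, s / (s ^ 2 + u ^ 2) ∂μ)
    (s : ℝ) (hs : 0 < s) :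
    0 < h s ∧ h s < 1 / s ∧
      ∃ d : ℝ, HasDerivAt h d s ∧ d < h s / s - 2 * h s ^ 2 := by
  have hs' : s ≠ 0 := hs.ne'
  have hhs := hdef s
  set f : ℝ → ℝ := fun u => s / (s ^ 2 + u ^ 2) with hfdef
  have hden : ∀ u : ℝ, 0 < s ^ 2 + u ^ 2 := fun u => by positivity
  have hcont : Continuous f :=
    continuous_const.div (by continuity) fun u => (hden u).ne'
  have hfpos : ∀ u, 0 < f u := fun u => div_pos hs (hden u)
  have hfle : ∀ u, f u ≤ 1 / s := fun u => by
    rw [hfdef]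
    show s / (s ^ 2 + u ^ 2) ≤ 1 / s
    rw [div_le_div_iff₀ (hden u) hs]
    nlinarith [sq_nonneg u]
  have hfi : Integrable f μ := by
    apply (integrable_const (1 / s)).mono' hcont.aestronglyMeasurable
    filter_upwards with u
    rw [Real.norm_eq_abs, abs_of_pos (hfpos u)]; exact hfle u
  have hfi2 : Integrable (fun u => f u ^ 2) μ := by
    apply (integrable_const ((1 / s) ^ 2)).mono' (hcont.pow 2).aestronglyMeasurable
    filter_upwards with u
    rw [Real.norm_eq_abs, Pi.pow_apply, abs_of_pos (pow_pos (hfpos u) 2)]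
    exact pow_le_pow_left₀ (hfpos u).le (hfle u) 2
  -- f is not a.e. constant
  have hnotae : ∀ c : ℝ, ¬ (∀ᵐ u ∂μ, f u = c) := by
    intro c hc
    set S : Set ℝ := {u | f u = c} ∩ Ici 0 with hS
    have hScne : μ Sᶜ = 0 := by
      have hcompl : Sᶜ = {u | f u = c}ᶜ ∪ Iio 0 := by
        rw [hS, compl_inter, compl_Ici]
      rw [hcompl]
      refine measure_union_null ?_ hμ
      have := ae_iff.mp hc
      simpa [compl_setOf] using this
    have hSne : μ S ≠ 0 := by
      intro h0
      have h1 : (1 : ENNReal) ≤ 0 := by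
        calc (1 : ENNReal) = μ univ := measure_univ.symm
          _ = μ (S ∪ Sᶜ) := by rw [union_compl_self]
          _ ≤ μ S + μ Sᶜ := measure_union_le _ _
          _ = 0 := by rw [h0, hScne, add_zero]
      simp at h1
    obtain ⟨u₀, hu₀⟩ := nonempty_of_measure_ne_zero hSne
    have hu₀c : f u₀ = c := hu₀.1
    have hu₀0 : (0 : ℝ) ≤ u₀ := hu₀.2
    have hSsub : S ⊆ {u₀} := by
      rintro v ⟨hv1, hv2⟩
      have heq : f v = f u₀ := by rw [hv1, hu₀c]
      have heq2 : s * (s ^ 2 + u₀ ^ 2) = s * (s ^ 2 + v ^ 2) := by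
        rw [hfdef] at heq
        exact (div_eq_div_iff (hden v).ne' (hden u₀).ne').mp heq
      have heq3 : v ^ 2 = u₀ ^ 2 := by
        have := mul_left_cancel₀ hs' heq2
        linarith
      have : v = u₀ := by
        rw [← Real.sqrt_sq (hv2 : (0:ℝ) ≤ v), heq3, Real.sqrt_sq hu₀0]
      simpa using this
    have hcu : μ ({u₀} : Set ℝ)ᶜ = 0 :=
      measure_mono_null (compl_subset_compl.mpr hSsub) hScne
    have hμeq : μ = Measure.dirac u₀ := by
      ext t ht
      rw [Measure.dirac_apply' _ ht]
      by_cases hmem : u₀ ∈ t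
      · have htc : μ tᶜ = 0 := by
          refine measure_mono_null ?_ hcu
          intro x hx hx'
          exact hx (by simpa using hx' ▸ hmem)
        have := measure_add_measure_compl ht (μ := μ)
        rw [htc, add_zero, measure_univ] at this
        rw [this, indicator_of_mem hmem]; rfl
      · have : μ t = 0 := by
          refine measure_mono_null ?_ hcu
          intro x hx hx'
          exact hmem (by simpa using hx' ▸ hx)
        rw [this, indicator_of_notMem hmem]
    exact hnd u₀ hμeq
  -- Part 1 : 0 < h s
  have hpos : 0 < h s := by
    rw [hhs]
    rw [integral_pos_iff_support_of_nonneg (fun u => (hfpos u).le) hfi]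
    have hsupp : Function.support f = univ := by
      ext u; simp [Function.support, (hfpos u).ne']
    rw [hsupp]
    simp
  -- Part 2 : h s < 1/s
  have hlt : h s < 1 / s := by
    have hint : Integrable (fun u => 1 / s - f u) μ := (integrable_const _).sub hfi
    have hnn : ∀ u, 0 ≤ 1 / s - f u := fun u => sub_nonneg.mpr (hfle u)
    have hne : ∫ u, (1 / s - f u) ∂μ ≠ 0 := by
      intro h0
      have hae := (integral_eq_zero_iff_of_nonneg (fun u => hnn u) hint).mp h0
      apply hnotae (1 / s)
      filter_upwards [hae] with u hu
      have : (1:ℝ) / s - f u = 0 := hu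
      linarith
    have hge : (0:ℝ) ≤ ∫ u, (1 / s - f u) ∂μ := integral_nonneg hnn
    have h0lt : 0 < ∫ u, (1 / s - f u) ∂μ := lt_of_le_of_ne hge (Ne.symm hne)
    have hcalc : ∫ u, (1 / s - f u) ∂μ = 1 / s - h s := by
      rw [integral_sub (integrable_const _) hfi, integral_const, hhs]
      simp
    linarith [hcalc ▸ h0lt]
  -- derivative
  have hderiv : ∀ (u t : ℝ), 0 < t →
      HasDerivAt (fun t => t / (t ^ 2 + u ^ 2)) ((u ^ 2 - t ^ 2) / (t ^ 2 + u ^ 2) ^ 2) t := by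
    intro u t ht
    have hA : (0:ℝ) < t ^ 2 + u ^ 2 := by positivity
    have h1 : HasDerivAt (fun t : ℝ => t ^ 2 + u ^ 2) (2 * t) t := by
      simpa using (hasDerivAt_pow 2 t).add_const (u ^ 2)
    have h2 := (hasDerivAt_id t).div h1 hA.ne'
    have heq : (u ^ 2 - t ^ 2) / (t ^ 2 + u ^ 2) ^ 2
        = (1 * (t ^ 2 + u ^ 2) - t * (2 * t)) / (t ^ 2 + u ^ 2) ^ 2 := by ring
    rw [heq]
    exact h2
  have hball : ∀ t ∈ Metric.ball s (s / 2), s / 2 < t := by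
    intro t ht
    rw [Metric.mem_ball, Real.dist_eq] at ht
    have := abs_lt.mp ht
    linarith [this.1]
  have main : Integrable (fun u => (u ^ 2 - s ^ 2) / (s ^ 2 + u ^ 2) ^ 2) μ ∧
      HasDerivAt (fun t => ∫ u, t / (t ^ 2 + u ^ 2) ∂μ)
        (∫ u, (u ^ 2 - s ^ 2) / (s ^ 2 + u ^ 2) ^ 2 ∂μ) s := by
    refine hasDerivAt_integral_of_dominated_loc_of_deriv_le (s := Metric.ball s (s / 2))
      (bound := fun _ => 4 / s ^ 2)
      (F := fun t u => t / (t ^ 2 + u ^ 2))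
      (F' := fun t u => (u ^ 2 - t ^ 2) / (t ^ 2 + u ^ 2) ^ 2)
      (Metric.ball_mem_nhds s (half_pos hs)) ?_ hfi ?_ ?_ (integrable_const _) ?_
    · filter_upwards with t
      apply Measurable.aestronglyMeasurable
      fun_prop
    · apply Measurable.aestronglyMeasurable
      fun_prop
    · filter_upwards with u
      intro t ht
      have ht2 : s / 2 < t := hball t ht
      have htpos : 0 < t := lt_trans (half_pos hs) ht2
      have hA : (0:ℝ) < t ^ 2 + u ^ 2 := by positivity
      rw [Real.norm_eq_abs, abs_div, abs_of_pos (pow_pos hA 2)]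
      rw [div_le_div_iff₀ (pow_pos hA 2) (show (0:ℝ) < s ^ 2 by positivity)]
      have habs : |u ^ 2 - t ^ 2| ≤ t ^ 2 + u ^ 2 := by
        rw [abs_le]; constructor <;> nlinarith [sq_nonneg u, sq_nonneg t]
      have hst : s ^ 2 ≤ 4 * t ^ 2 := by nlinarith
      nlinarith [mul_le_mul habs hst (by positivity : (0:ℝ) ≤ s ^ 2) hA.le,
        mul_nonneg hA.le (sq_nonneg u), sq_nonneg u]
    · filter_upwards with u
      intro t ht
      exact hderiv u t (lt_trans (half_pos hs) (hball t ht))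
  obtain ⟨hF'int, hhd⟩ := main
  have hheq : h = fun t => ∫ u, t / (t ^ 2 + u ^ 2) ∂μ := funext hdef
  have hd : HasDerivAt h (∫ u, (u ^ 2 - s ^ 2) / (s ^ 2 + u ^ 2) ^ 2 ∂μ) s := by
    rw [hheq]; exact hhd
  set d : ℝ := ∫ u, (u ^ 2 - s ^ 2) / (s ^ 2 + u ^ 2) ^ 2 ∂μ with hdd
  refine ⟨hpos, hlt, d, hd, ?_⟩
  -- final inequality
  have hgcont : Continuous (fun u : ℝ => 1 / (s ^ 2 + u ^ 2)) :=
    continuous_const.div (by continuity) fun u => (hden u).ne'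
  have hint1 : Integrable (fun u => 1 / (s ^ 2 + u ^ 2)) μ := by
    apply (integrable_const (1 / s ^ 2)).mono' hgcont.aestronglyMeasurable
    filter_upwards with u
    rw [Real.norm_eq_abs, abs_of_pos (by positivity)]
    rw [div_le_div_iff₀ (hden u) (by positivity)]
    nlinarith [sq_nonneg u]
  have hint3 : Integrable (fun u => (1 / (s ^ 2 + u ^ 2)) ^ 2) μ := by
    apply (integrable_const ((1 / s ^ 2) ^ 2)).mono' (hgcont.pow 2).aestronglyMeasurable
    filter_upwards with u
    simp only [Real.norm_eq_abs, Pi.pow_apply]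
    rw [abs_of_pos (by positivity)]
    apply pow_le_pow_left₀ (by positivity)
    rw [div_le_div_iff₀ (hden u) (by positivity)]
    nlinarith [sq_nonneg u]
  have hsum : (∫ u, 1 / (s ^ 2 + u ^ 2) ∂μ) - d
      = 2 * s ^ 2 * ∫ u, (1 / (s ^ 2 + u ^ 2)) ^ 2 ∂μ := by
    rw [hdd, ← integral_sub hint1 hF'int, ← integral_const_mul]
    apply integral_congr_ae
    filter_upwards with u
    have hA := (hden u).ne'
    field_simp
    ring
  have hhss : h s / s = ∫ u, 1 / (s ^ 2 + u ^ 2) ∂μ := by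
    rw [hhs, ← integral_div]
    apply integral_congr_ae
    filter_upwards with u
    field_simp
  have hfsq : (∫ u, f u ^ 2 ∂μ) = s ^ 2 * ∫ u, (1 / (s ^ 2 + u ^ 2)) ^ 2 ∂μ := by
    rw [← integral_const_mul]
    apply integral_congr_ae
    filter_upwards with u
    rw [div_pow, div_pow, one_pow, mul_one_div]
  -- strict Cauchy-Schwarz
  have key : h s ^ 2 < ∫ u, f u ^ 2 ∂μ := by
    set m : ℝ := h s with hm
    have hgeq : ∀ u, (f u - m) ^ 2 = (f u ^ 2 - 2 * m * f u) + m ^ 2 := fun u => by ring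
    have hsubint : Integrable (fun u => f u ^ 2 - 2 * m * f u) μ :=
      hfi2.sub (hfi.const_mul (2 * m))
    have hgint : Integrable (fun u => (f u - m) ^ 2) μ := by
      have : (fun u => (f u - m) ^ 2) = fun u => (f u ^ 2 - 2 * m * f u) + m ^ 2 :=
        funext hgeq
      rw [this]
      exact hsubint.add (integrable_const _)
    have hInt : ∫ u, (f u - m) ^ 2 ∂μ = (∫ u, f u ^ 2 ∂μ) - m ^ 2 := by
      calc ∫ u, (f u - m) ^ 2 ∂μ
          = ∫ u, ((f u ^ 2 - 2 * m * f u) + m ^ 2) ∂μ := by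
            apply integral_congr_ae; filter_upwards with u; exact hgeq u
        _ = (∫ u, (f u ^ 2 - 2 * m * f u) ∂μ) + ∫ _, m ^ 2 ∂μ :=
            integral_add hsubint (integrable_const _)
        _ = ((∫ u, f u ^ 2 ∂μ) - ∫ u, 2 * m * f u ∂μ) + m ^ 2 := by
            rw [integral_sub hfi2 (hfi.const_mul (2 * m)), integral_const]
            simp
        _ = (∫ u, f u ^ 2 ∂μ) - m ^ 2 := by
            rw [integral_const_mul, ← hhs]; ring
    have hnn : (0:ℝ) ≤ ∫ u, (f u - m) ^ 2 ∂μ := integral_nonneg fun u => sq_nonneg _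
    have hne : ∫ u, (f u - m) ^ 2 ∂μ ≠ 0 := by
      intro h0
      have hae := (integral_eq_zero_iff_of_nonneg (fun u => sq_nonneg _) hgint).mp h0
      apply hnotae m
      filter_upwards [hae] with u hu
      have : (f u - m) ^ 2 = 0 := hu
      have := pow_eq_zero_iff (n := 2) (by norm_num) |>.mp this
      linarith
    have : 0 < ∫ u, (f u - m) ^ 2 ∂μ := lt_of_le_of_ne hnn (Ne.symm hne)
    linarith [hInt ▸ this]
  -- combine
  have h2 : 2 * h s ^ 2 < 2 * s ^ 2 * ∫ u, (1 / (s ^ 2 + u ^ 2)) ^ 2 ∂μ := by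
    have := key
    rw [hfsq] at this
    nlinarith
  linarith [hsum, hhss ▸ hsum]
end

section
/- Let μ be a probability measure on [0,∞) which is not a Dirac measure, let h(s) = ∫₀^∞ s/(s²+u²) dμ(u), and define k(s,t) = (s − t)·(1/h(s) − s + t) for s > 0, t ∈ ℝ. Then for every fixed t > 0, the map s ↦ k(s,t) is a strictly increasing bijection from (t,∞) onto (0,∞). -/
open MeasureTheory Set

private lemma hasDerivAt_b (u : ℝ) {s : ℝ} (hs : 0 < s) :
    HasDerivAt (fun x : ℝ => x / (x ^ 2 + u ^ 2))
      ((u ^ 2 - s ^ 2) / (s ^ 2 + u ^ 2) ^ 2) s := by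
  have hne : s ^ 2 + u ^ 2 ≠ 0 := by positivity
  have h2 : HasDerivAt (fun x : ℝ => x ^ 2 + u ^ 2) (2 * s) s := by
    simpa using ((hasDerivAt_pow 2 s).add_const (u ^ 2))
  have := (hasDerivAt_id s).div h2 hne
  refine (this : HasDerivAt (fun x : ℝ => x / (x ^ 2 + u ^ 2)) _ s).congr_deriv ?_
  simp only [id]
  ring

private lemma integrable_of_bound {μ : Measure ℝ} [IsProbabilityMeasure μ] {f : ℝ → ℝ}
    (hf : Continuous f) (C : ℝ) (hC : ∀ u, |f u| ≤ C) : Integrable f μ := by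
  refine (integrable_const C).mono' hf.aestronglyMeasurable ?_
  exact Filter.Eventually.of_forall fun u => by simpa [Real.norm_eq_abs] using hC u

private lemma b_cont {s : ℝ} (hs : 0 < s) :
    Continuous (fun u : ℝ => s / (s ^ 2 + u ^ 2)) := by
  apply continuous_const.div (by fun_prop)
  intro u; positivity

private lemma b_bound {s : ℝ} (hs : 0 < s) (u : ℝ) : |s / (s ^ 2 + u ^ 2)| ≤ 1 / s := by
  rw [abs_of_nonneg (by positivity)]
  rw [div_le_div_iff₀ (by positivity) hs]
  nlinarith [sq_nonneg u]

theorem stmt5 (μ : Measure ℝ) [IsProbabilityMeasure μ] (hμ : μ (Iio 0) = 0)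
    (hnd : ∀ c : ℝ, μ ≠ Measure.dirac c)
    (h : ℝ → ℝ) (hdef : ∀ s : ℝ, h s = ∫ u, s / (s ^ 2 + u ^ 2) ∂μ)
    (k : ℝ → ℝ → ℝ) (kdef : ∀ s t : ℝ, k s t = (s - t) * (1 / h s - s + t))
    (t : ℝ) (ht : 0 < t) :
    StrictMonoOn (fun s => k s t) (Ioi t) ∧
      Set.BijOn (fun s => k s t) (Ioi t) (Ioi 0) := by
  -- integrability facts
  have hint : ∀ s : ℝ, 0 < s → Integrable (fun u => s / (s ^ 2 + u ^ 2)) μ :=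
    fun s hs => integrable_of_bound (b_cont hs) (1 / s) (b_bound hs)
  have hint2 : ∀ s : ℝ, 0 < s → Integrable (fun u => (s / (s ^ 2 + u ^ 2)) ^ 2) μ := by
    intro s hs
    refine integrable_of_bound ((b_cont hs).pow 2) ((1 / s) ^ 2) fun u => ?_
    rw [abs_pow]
    exact pow_le_pow_left₀ (abs_nonneg _) (b_bound hs u) 2
  -- positivity of h
  have hH : ∀ s : ℝ, 0 < s → 0 < h s := by
    intro s hs
    rw [hdef]
    rw [integral_pos_iff_support_of_nonneg (fun u => by positivity) (hint s hs)]
    have hsupp : (Function.support fun u : ℝ => s / (s ^ 2 + u ^ 2)) = univ :=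
      eq_univ_iff_forall.mpr fun u => ne_of_gt (by positivity)
    rw [hsupp]
    simp
  -- derivative of h
  have hderiv : ∀ s : ℝ, 0 < s →
      HasDerivAt h (∫ u, (u ^ 2 - s ^ 2) / (s ^ 2 + u ^ 2) ^ 2 ∂μ) s := by
    intro s hs
    have heq : h = fun x : ℝ => ∫ u, x / (x ^ 2 + u ^ 2) ∂μ := funext hdef
    rw [heq]
    have := hasDerivAt_integral_of_dominated_loc_of_deriv_le
      (F := fun (x : ℝ) (u : ℝ) => x / (x ^ 2 + u ^ 2))
      (F' := fun (x : ℝ) (u : ℝ) => (u ^ 2 - x ^ 2) / (x ^ 2 + u ^ 2) ^ 2)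
      (x₀ := s) (s := Metric.ball s (s / 2)) (bound := fun _ => (2 / s) ^ 2) (Metric.ball_mem_nhds _ (by positivity))
      (Filter.Eventually.of_forall fun x =>
        (measurable_const.div (by fun_prop)).aestronglyMeasurable)
      (hint s hs)
      ((Measurable.div (by fun_prop) (by fun_prop)).aestronglyMeasurable)
      ?_ (integrable_const _)
      (Filter.Eventually.of_forall fun u => fun x hx => by
        have hx0 : 0 < x := by
          have := Metric.mem_ball.mp hx
          rw [Real.dist_eq] at this
          have := abs_lt.mp this
          linarith [this.1]
        exact hasDerivAt_b u hx0)
    · exact this.2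
    · refine Filter.Eventually.of_forall fun u => fun x hx => ?_
      have hxd : |x - s| < s / 2 := by
        have := Metric.mem_ball.mp hx; rwa [Real.dist_eq] at this
      have hx1 : s / 2 < x := by have := abs_lt.mp hxd; linarith [this.1]
      have hx0 : 0 < x := by linarith
      have habs : |u ^ 2 - x ^ 2| ≤ x ^ 2 + u ^ 2 :=
        abs_le.mpr ⟨by nlinarith, by nlinarith⟩
      have hA : (0:ℝ) < x ^ 2 + u ^ 2 := by positivity
      rw [Real.norm_eq_abs, abs_div,
        abs_of_nonneg (by positivity : (0:ℝ) ≤ (x ^ 2 + u ^ 2) ^ 2)]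
      calc |u ^ 2 - x ^ 2| / (x ^ 2 + u ^ 2) ^ 2
          ≤ (x ^ 2 + u ^ 2) / (x ^ 2 + u ^ 2) ^ 2 := by gcongr
        _ = 1 / (x ^ 2 + u ^ 2) := by field_simp
        _ ≤ 1 / x ^ 2 := by
            apply one_div_le_one_div_of_le (by positivity)
            nlinarith [sq_nonneg u]
        _ ≤ (2 / s) ^ 2 := by
            rw [div_pow, div_le_div_iff₀ (by positivity) (by positivity)]
            nlinarith
  -- derivative of k · t at any s > 0
  have hK : ∀ s : ℝ, 0 < s → HasDerivAt (fun s => k s t)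
      ((1 / h s - s + t) + (s - t) *
        (-(∫ u, (u ^ 2 - s ^ 2) / (s ^ 2 + u ^ 2) ^ 2 ∂μ) / (h s) ^ 2 - 1)) s := by
    intro s hs
    have hh := hH s hs
    have hd := hderiv s hs
    have h1 : HasDerivAt (fun x => (h x)⁻¹ - x + t)
        (-(∫ u, (u ^ 2 - s ^ 2) / (s ^ 2 + u ^ 2) ^ 2 ∂μ) / (h s) ^ 2 - 1) s := by
      simpa using ((hd.inv hh.ne').sub (hasDerivAt_id s)).add_const t
    have h2 : HasDerivAt (fun x : ℝ => x - t) 1 s := (hasDerivAt_id s).sub_const t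
    have hk : (fun s => k s t) = fun s => (s - t) * ((h s)⁻¹ - s + t) :=
      funext fun s => by rw [kdef, one_div]
    rw [hk]
    refine (h2.mul h1 : HasDerivAt (fun s => (s - t) * ((h s)⁻¹ - s + t)) _ s).congr_deriv ?_
    rw [one_div]
    ring
  -- key inequality : derivative ≥ t on Ioi t
  have hKge : ∀ s : ℝ, t < s → t ≤ (1 / h s - s + t) + (s - t) *
      (-(∫ u, (u ^ 2 - s ^ 2) / (s ^ 2 + u ^ 2) ^ 2 ∂μ) / (h s) ^ 2 - 1) := by
    intro s hs
    have hs0 : 0 < s := ht.trans hs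
    have hsne : s ≠ 0 := hs0.ne'
    have hh := hH s hs0
    have i1 : Integrable (fun u => (1 / s) * (s / (s ^ 2 + u ^ 2))) μ :=
      (hint s hs0).const_mul _
    have i2 : Integrable (fun u => 2 * (s / (s ^ 2 + u ^ 2)) ^ 2) μ :=
      (hint2 s hs0).const_mul _
    have hid : s * (∫ u, (u ^ 2 - s ^ 2) / (s ^ 2 + u ^ 2) ^ 2 ∂μ) =
        h s - 2 * s * (∫ u, (s / (s ^ 2 + u ^ 2)) ^ 2 ∂μ) := by
      rw [hdef]
      rw [show (fun u : ℝ => (u ^ 2 - s ^ 2) / (s ^ 2 + u ^ 2) ^ 2) =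
          (fun u : ℝ => (1 / s) * (s / (s ^ 2 + u ^ 2)) - 2 * (s / (s ^ 2 + u ^ 2)) ^ 2)
          from funext fun u => by
            have h2' : s ^ 2 + u ^ 2 ≠ 0 := by positivity
            field_simp
            ring]
      rw [integral_sub i1 i2, integral_const_mul, integral_const_mul]
      field_simp
    have hvar : (h s) ^ 2 ≤ ∫ u, (s / (s ^ 2 + u ^ 2)) ^ 2 ∂μ := by
      have hnn : 0 ≤ ∫ u, (s / (s ^ 2 + u ^ 2) - h s) ^ 2 ∂μ :=
        integral_nonneg fun u => sq_nonneg _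
      have j2 : Integrable (fun u => (2 * h s) * (s / (s ^ 2 + u ^ 2))) μ :=
        (hint s hs0).const_mul _
      have j3 : Integrable
          (fun u => (s / (s ^ 2 + u ^ 2)) ^ 2 - (2 * h s) * (s / (s ^ 2 + u ^ 2))) μ :=
        (hint2 s hs0).sub j2
      have hexp : ∫ u, (s / (s ^ 2 + u ^ 2) - h s) ^ 2 ∂μ =
          (∫ u, (s / (s ^ 2 + u ^ 2)) ^ 2 ∂μ) -
            2 * h s * (∫ u, s / (s ^ 2 + u ^ 2) ∂μ) + (h s) ^ 2 := by
        rw [show (fun u : ℝ => (s / (s ^ 2 + u ^ 2) - h s) ^ 2) =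
            (fun u : ℝ => ((s / (s ^ 2 + u ^ 2)) ^ 2 -
              (2 * h s) * (s / (s ^ 2 + u ^ 2)) + (h s) ^ 2))
            from funext fun u => by ring]
        rw [integral_add j3 (integrable_const _),
          integral_sub (hint2 s hs0) j2, integral_const_mul, integral_const]
        simp [measure_univ]
      rw [← hdef s] at hexp
      nlinarith [hnn, hexp]
    have hI2le : s * (∫ u, (s / (s ^ 2 + u ^ 2)) ^ 2 ∂μ) ≤ h s := by
      rw [hdef, ← integral_const_mul]
      refine integral_mono ((hint2 s hs0).const_mul s) (hint s hs0) fun u => ?_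
      have hA : (0:ℝ) < s ^ 2 + u ^ 2 := by positivity
      simp only
      rw [div_pow, mul_div_assoc', div_le_div_iff₀ (by positivity) hA]
      nlinarith [mul_nonneg (mul_nonneg hs0.le hA.le) (sq_nonneg u)]
    set H := h s with hHdef
    set D := ∫ u, (u ^ 2 - s ^ 2) / (s ^ 2 + u ^ 2) ^ 2 ∂μ with hDdef
    set I2 := ∫ u, (s / (s ^ 2 + u ^ 2)) ^ 2 ∂μ with hI2def
    have key : 0 ≤ s * (H - (2 * s - t) * H ^ 2 - (s - t) * D) := by
      have c1 : 0 ≤ (2 * s - t) * s * (I2 - H ^ 2) := by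
        apply mul_nonneg (mul_nonneg (by linarith) hs0.le)
        linarith [hvar]
      have c2 : 0 ≤ t * (H - s * I2) := mul_nonneg ht.le (by linarith [hI2le])
      nlinarith [hid, c1, c2]
    have keyE : 0 ≤ H - (2 * s - t) * H ^ 2 - (s - t) * D := by
      nlinarith [key, hs0]
    have e3 : ((1 / H - s + t) + (s - t) * (-D / H ^ 2 - 1)) - t =
        (H - (2 * s - t) * H ^ 2 - (s - t) * D) / H ^ 2 := by
      field_simp
      ring
    have h5 : 0 ≤ ((1 / H - s + t) + (s - t) * (-D / H ^ 2 - 1)) - t := by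
      rw [e3]
      exact div_nonneg keyE (by positivity)
    linarith
  -- continuity on Ici t
  have hcontk : ContinuousOn (fun s => k s t) (Ici t) := fun s hsm =>
    ((hK s (lt_of_lt_of_le ht hsm)).continuousAt).continuousWithinAt
  -- strict monotonicity on Ici t
  have smo : StrictMonoOn (fun s => k s t) (Ici t) := by
    apply strictMonoOn_of_deriv_pos (convex_Ici t) hcontk
    intro x hx
    rw [interior_Ici] at hx
    rw [(hK x (ht.trans hx)).deriv]
    exact lt_of_lt_of_le ht (hKge x hx)
  have h0 : k t t = 0 := by rw [kdef]; ring
  -- growth bound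
  have grow : ∀ s : ℝ, t ≤ s → t * (s - t) ≤ k s t := by
    have hts : ∀ x : ℝ, HasDerivAt (fun s : ℝ => t * s) t x := by
      intro x
      simpa using (hasDerivAt_id x).const_mul t
    have mono : MonotoneOn (fun s => k s t - t * s) (Ici t) := by
      apply monotoneOn_of_deriv_nonneg (convex_Ici t)
      · exact hcontk.sub (continuous_const.mul continuous_id).continuousOn
      · intro x hx
        rw [interior_Ici] at hx
        exact ((hK x (ht.trans hx)).sub (hts x)).differentiableAt.differentiableWithinAt
      · intro x hx
        rw [interior_Ici] at hx
        rw [show deriv (fun s => k s t - t * s) x = _ from ((hK x (ht.trans hx)).sub (hts x)).deriv]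
        have := hKge x hx
        linarith
    intro s hsm
    have h6 := mono self_mem_Ici hsm hsm
    have h7 : k t t - t * t ≤ k s t - t * s := h6
    rw [h0] at h7
    linarith
  refine ⟨smo.mono Ioi_subset_Ici_self, ?_, (smo.mono Ioi_subset_Ici_self).injOn, ?_⟩
  · -- MapsTo
    intro s hsm
    have h8 : k t t < k s t := smo self_mem_Ici (mem_Ici.mpr (le_of_lt hsm)) hsm
    rw [h0] at h8
    exact h8
  · -- SurjOn
    intro y hy
    have hy0 : 0 < y := hy
    set s2 : ℝ := t + y / t with hs2def
    have hs2t : t < s2 := by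
      have : 0 < y / t := div_pos hy0 ht
      rw [hs2def]; linarith
    have hks2 : y ≤ k s2 t := by
      have h9 := grow s2 hs2t.le
      have e : t * (s2 - t) = y := by
        rw [hs2def]; field_simp; ring
      rw [e] at h9
      exact h9
    have hIVT := intermediate_value_Icc hs2t.le (hcontk.mono Icc_subset_Ici_self)
    have hymem : y ∈ Icc (k t t) (k s2 t) := by
      rw [h0]; exact ⟨hy0.le, hks2⟩
    obtain ⟨s, hsmem, hsy⟩ := hIVT hymem
    have hsy' : k s t = y := hsy
    have hst : t < s := by
      rcases lt_or_eq_of_le hsmem.1 with h' | h'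
      · exact h'
      · exfalso
        rw [← h', h0] at hsy'
        exact hy0.ne hsy'
    exact ⟨s, hst, hsy'⟩
end

section
/- Let μ be a probability measure on [0,∞) which is not a Dirac measure, let h(s) = ∫₀^∞ s/(s²+u²) dμ(u), and k(s,t) = (s−t)·(1/h(s) − s + t). Then s ↦ k(s,0) is a strictly increasing bijection from (0,∞) onto (λ₁(μ)², λ₂(μ)²), where λ₁(μ) = (∫ u^{-2} dμ)^{-1/2} and λ₂(μ) = (∫ u² dμ)^{1/2}. -/
open MeasureTheory Set
open Filter Topology
open scoped ENNReal

lemma aux_dirac (μ : Measure ℝ) [IsProbabilityMeasure μ] {c : ℝ} (hc : μ {c}ᶜ = 0) :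
    μ = Measure.dirac c := by
  have h1 : μ {c} = 1 := by
    have := prob_compl_eq_one_sub (μ := μ) (measurableSet_singleton c)
    rw [hc] at this
    have h2 : μ {c} ≤ 1 := prob_le_one
    exact le_antisymm h2 (tsub_eq_zero_iff_le.mp this.symm)
  ext s hs
  rw [Measure.dirac_apply' _ hs]
  by_cases hcs : c ∈ s
  · have hsub : s ∩ {c} = {c} := by simp [hcs]
    have := measure_inter_add_diff s (μ := μ) (measurableSet_singleton c)
    have hd : μ (s \ {c}) = 0 := measure_mono_null (diff_subset_compl s {c}) hc
    rw [hsub, hd, add_zero, h1] at this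
    simp [this, hcs]
  · have : s ⊆ {c}ᶜ := fun x hx => by simp; rintro rfl; exact hcs hx
    simp [measure_mono_null this hc, hcs]

lemma aux_offdiag (μ : Measure ℝ) [IsProbabilityMeasure μ]
    (hd : ∀ c : ℝ, μ {c}ᶜ = 0 → μ = Measure.dirac c)
    (hnd : ∀ c : ℝ, μ ≠ Measure.dirac c) :
    0 < (μ.prod μ) {p : ℝ × ℝ | p.1 ≠ p.2} := by
  rw [pos_iff_ne_zero]
  intro h0
  have hms : MeasurableSet {p : ℝ × ℝ | p.1 = p.2} := measurableSet_eq_fun measurable_fst measurable_snd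
  have : (μ.prod μ) {p : ℝ × ℝ | p.1 ≠ p.2} = ∫⁻ x, μ (Prod.mk x ⁻¹' {p : ℝ × ℝ | p.1 ≠ p.2}) ∂μ :=
    Measure.prod_apply hms.compl
  rw [this] at h0
  have hmeas : Measurable fun x : ℝ => μ (Prod.mk x ⁻¹' {p : ℝ × ℝ | p.1 ≠ p.2}) :=
    measurable_measure_prodMk_left hms.compl
  rw [lintegral_eq_zero_iff hmeas] at h0
  have : ∃ x : ℝ, μ (Prod.mk x ⁻¹' {p : ℝ × ℝ | p.1 ≠ p.2}) = 0 := h0.exists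
  obtain ⟨x, hx⟩ := this
  have hpre : Prod.mk x ⁻¹' {p : ℝ × ℝ | p.1 ≠ p.2} = {x}ᶜ := by
    ext y; simp [eq_comm]
  rw [hpre] at hx
  exact hnd x (hd x hx)

section auxreal
variable (μ : Measure ℝ) [IsProbabilityMeasure μ]

lemma aux_contB {s : ℝ} (hs : s ≠ 0) : Continuous fun u : ℝ => (s^2+u^2)⁻¹ := by
  apply Continuous.inv₀ (by continuity)
  intro u; positivity

lemma aux_contA {s : ℝ} (hs : s ≠ 0) : Continuous fun u : ℝ => u^2/(s^2+u^2) := by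
  apply Continuous.div (by continuity) (by continuity)
  intro u; positivity

lemma aux_intB {s : ℝ} (hs : 0 < s) : Integrable (fun u : ℝ => (s^2+u^2)⁻¹) μ := by
  refine Integrable.mono' (integrable_const ((s^2)⁻¹)) ((aux_contB hs.ne').aestronglyMeasurable) ?_
  filter_upwards with u
  rw [Real.norm_eq_abs, abs_of_nonneg (by positivity)]
  exact inv_anti₀ (by positivity) (by nlinarith [sq_nonneg u])

lemma aux_intA {s : ℝ} (hs : 0 < s) : Integrable (fun u : ℝ => u^2/(s^2+u^2)) μ := by
  refine Integrable.mono' (integrable_const 1) ((aux_contA hs.ne').aestronglyMeasurable) ?_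
  filter_upwards with u
  rw [Real.norm_eq_abs, abs_of_nonneg (by positivity)]
  rw [div_le_one (by positivity)]; nlinarith [sq_nonneg s]

lemma aux_Bpos {s : ℝ} (hs : 0 < s) : 0 < ∫ u, (s^2+u^2)⁻¹ ∂μ := by
  rw [integral_pos_iff_support_of_nonneg_ae
    (Eventually.of_forall fun u => by positivity) (aux_intB μ hs)]
  have : Function.support (fun u : ℝ => (s^2+u^2)⁻¹) = univ := by
    ext u; simp only [Function.mem_support, mem_univ, iff_true]
    positivity
  rw [this]; simp

lemma aux_Apos (hd : ∀ c : ℝ, μ {c}ᶜ = 0 → μ = Measure.dirac c)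
    (hnd : ∀ c : ℝ, μ ≠ Measure.dirac c) {s : ℝ} (hs : 0 < s) :
    0 < ∫ u, u^2/(s^2+u^2) ∂μ := by
  rw [integral_pos_iff_support_of_nonneg_ae
    (Eventually.of_forall fun u => by positivity) (aux_intA μ hs)]
  have hsup : Function.support (fun u : ℝ => u^2/(s^2+u^2)) = {(0:ℝ)}ᶜ := by
    ext u
    simp only [Function.mem_support, mem_compl_iff, mem_singleton_iff]
    constructor
    · intro h h0; apply h; rw [h0]; simp
    · intro h; have : u^2 > 0 := by positivity
      positivity
  rw [hsup, pos_iff_ne_zero]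
  intro h0
  exact hnd 0 (hd 0 h0)

lemma aux_sum {s : ℝ} (hs : 0 < s) :
    (∫ u, u^2/(s^2+u^2) ∂μ) + s^2 * ∫ u, (s^2+u^2)⁻¹ ∂μ = 1 := by
  rw [← integral_const_mul, ← integral_add (aux_intA μ hs) ((aux_intB μ hs).const_mul _)]
  have : ∀ u : ℝ, u^2/(s^2+u^2) + s^2 * (s^2+u^2)⁻¹ = 1 := by
    intro u
    have hden : s^2+u^2 ≠ 0 := by positivity
    field_simp
    ring
  simp_rw [this]
  simp

lemma aux_fval (h : ℝ → ℝ) (hdef : ∀ s : ℝ, h s = ∫ u, s / (s ^ 2 + u ^ 2) ∂μ)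
    (k : ℝ → ℝ → ℝ) (kdef : ∀ s t : ℝ, k s t = (s - t) * (1 / h s - s + t))
    {s : ℝ} (hs : 0 < s) :
    k s 0 = (∫ u, u^2/(s^2+u^2) ∂μ) / (∫ u, (s^2+u^2)⁻¹ ∂μ) := by
  set B := ∫ u, (s^2+u^2)⁻¹ ∂μ with hB
  have hBpos : 0 < B := aux_Bpos μ hs
  have hh : h s = s * B := by
    rw [hdef, hB, ← integral_const_mul]
    exact integral_congr_ae (Eventually.of_forall fun u => div_eq_mul_inv _ _)
  have hsum := aux_sum μ hs
  rw [kdef, hh]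
  have h1 : (∫ u, u^2/(s^2+u^2) ∂μ) = 1 - s^2 * B := by linarith
  rw [h1]
  field_simp
  ring
end auxreal

variable (μ : Measure ℝ) [IsProbabilityMeasure μ]

lemma aux_mono (hμ : μ (Iio 0) = 0)
    (hoff : 0 < (μ.prod μ) {p : ℝ × ℝ | p.1 ≠ p.2})
    (intA : ∀ {s : ℝ}, 0 < s → Integrable (fun u : ℝ => u^2/(s^2+u^2)) μ)
    (intB : ∀ {s : ℝ}, 0 < s → Integrable (fun u : ℝ => (s^2+u^2)⁻¹) μ)
    {s₁ s₂ : ℝ} (hs₁ : 0 < s₁) (h12 : s₁ < s₂) :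
    (∫ u, u^2/(s₁^2+u^2) ∂μ) * (∫ u, (s₂^2+u^2)⁻¹ ∂μ)
      < (∫ u, u^2/(s₂^2+u^2) ∂μ) * (∫ u, (s₁^2+u^2)⁻¹ ∂μ) := by
  have hs₂ : 0 < s₂ := hs₁.trans h12
  set π := μ.prod μ with hπ
  set φ : ℝ × ℝ → ℝ := fun p => p.1^2/(s₂^2+p.1^2) * (s₁^2+p.2^2)⁻¹ with hφ
  set φ' : ℝ × ℝ → ℝ := fun p => p.1^2/(s₁^2+p.1^2) * (s₂^2+p.2^2)⁻¹ with hφ'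
  set ψ : ℝ × ℝ → ℝ := fun p => (s₁^2+p.1^2)⁻¹ * (p.2^2/(s₂^2+p.2^2)) with hψ
  set ψ' : ℝ × ℝ → ℝ := fun p => (s₂^2+p.1^2)⁻¹ * (p.2^2/(s₁^2+p.2^2)) with hψ'
  set δ : ℝ × ℝ → ℝ := fun p =>
    (p.1^2-p.2^2)^2*(s₂^2-s₁^2) /
      ((s₁^2+p.1^2)*(s₂^2+p.1^2)*((s₁^2+p.2^2)*(s₂^2+p.2^2))) with hδ
  have den1 : ∀ u : ℝ, (0:ℝ) < s₁^2+u^2 := fun u => by positivity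
  have den2 : ∀ u : ℝ, (0:ℝ) < s₂^2+u^2 := fun u => by positivity
  have hkey : ∀ p : ℝ × ℝ, δ p = φ p + ψ p - φ' p - ψ' p := by
    intro ⟨u, v⟩
    simp only [hδ, hφ, hψ, hφ', hψ']
    have h1 := (den1 u).ne'
    have h2 := (den2 u).ne'
    have h3 := (den1 v).ne'
    have h4 := (den2 v).ne'
    field_simp
    ring
  have iφ : Integrable φ π := (intA hs₂).mul_prod (intB hs₁)
  have iφ' : Integrable φ' π := (intA hs₁).mul_prod (intB hs₂)
  have iψ : Integrable ψ π := (intB hs₁).mul_prod (intA hs₂)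
  have iψ' : Integrable ψ' π := (intB hs₂).mul_prod (intA hs₁)
  have iδ : Integrable δ π := by
    have : δ = fun p => φ p + ψ p - φ' p - ψ' p := funext hkey
    rw [this]
    exact ((iφ.add iψ).sub iφ').sub iψ'
  -- swap identities
  have swφ : ∫ p, ψ p ∂π = ∫ p, φ p ∂π := by
    rw [hπ, ← integral_prod_swap (f := φ)]
    congr 1; ext p; simp only [hφ, hψ, Prod.fst_swap, Prod.snd_swap]; ring
  have swφ' : ∫ p, ψ' p ∂π = ∫ p, φ' p ∂π := by
    rw [hπ, ← integral_prod_swap (f := φ')]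
    congr 1; ext p; simp only [hφ', hψ', Prod.fst_swap, Prod.snd_swap]; ring
  have hδnn : ∀ p : ℝ × ℝ, 0 ≤ δ p := by
    intro ⟨u, v⟩
    have h12' : (0:ℝ) < s₂^2 - s₁^2 := by nlinarith
    have := den1 u; have := den2 u; have := den1 v; have := den2 v
    simp only [hδ]
    positivity
  have hδpos : 0 < ∫ p, δ p ∂π := by
    rw [integral_pos_iff_support_of_nonneg_ae (Eventually.of_forall hδnn) iδ]
    have hbad1 : π {p : ℝ × ℝ | p.1 < 0} = 0 := by
      have : {p : ℝ × ℝ | p.1 < 0} = (Iio 0) ×ˢ univ := by ext p; simp [Set.mem_prod]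
      rw [this, hπ, Measure.prod_prod, hμ, zero_mul]
    have hbad2 : π {p : ℝ × ℝ | p.2 < 0} = 0 := by
      have : {p : ℝ × ℝ | p.2 < 0} = univ ×ˢ (Iio 0) := by ext p; simp [Set.mem_prod]
      rw [this, hπ, Measure.prod_prod, hμ, mul_zero]
    have hsub : {p : ℝ × ℝ | p.1 ≠ p.2} ⊆
        Function.support δ ∪ ({p : ℝ × ℝ | p.1 < 0} ∪ {p : ℝ × ℝ | p.2 < 0}) := by
      rintro ⟨u, v⟩ huv
      by_cases hu : u < 0
      · exact Or.inr (Or.inl hu)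
      by_cases hv : v < 0
      · exact Or.inr (Or.inr hv)
      left
      push_neg at hu hv
      have huv2 : u^2 ≠ v^2 := by
        rcases (Ne.lt_or_gt huv) with hlt | hlt
        · exact (pow_lt_pow_left₀ hlt hu two_ne_zero).ne
        · exact (pow_lt_pow_left₀ hlt hv two_ne_zero).ne'
      have h12' : (0:ℝ) < s₂^2 - s₁^2 := by nlinarith
      have e1 := den1 u; have e2 := den2 u; have e3 := den1 v; have e4 := den2 v
      simp only [Function.mem_support, hδ]
      have hnum : (0:ℝ) < (u^2-v^2)^2*(s₂^2-s₁^2) := by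
        have : u^2 - v^2 ≠ 0 := sub_ne_zero.mpr huv2
        positivity
      positivity
    calc 0 < π {p : ℝ × ℝ | p.1 ≠ p.2} := hoff
      _ ≤ π (Function.support δ) + π ({p : ℝ × ℝ | p.1 < 0} ∪ {p : ℝ × ℝ | p.2 < 0}) :=
          le_trans (measure_mono hsub) (measure_union_le _ _)
      _ = π (Function.support δ) := by
          rw [measure_union_null hbad1 hbad2, add_zero]
  have hint : ∫ p, δ p ∂π = 2 * ((∫ u, u^2/(s₂^2+u^2) ∂μ) * (∫ u, (s₁^2+u^2)⁻¹ ∂μ))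
      - 2 * ((∫ u, u^2/(s₁^2+u^2) ∂μ) * (∫ u, (s₂^2+u^2)⁻¹ ∂μ)) := by
    have : ∫ p, δ p ∂π = ∫ p, (φ p + ψ p - φ' p - ψ' p) ∂π := by
      congr 1; exact funext hkey
    have i2 : Integrable (fun p => φ p + ψ p) π := iφ.add iψ
    have i3 : Integrable (fun p => φ p + ψ p - φ' p) π := i2.sub iφ'
    rw [this, integral_sub i3 iψ', integral_sub i2 iφ', integral_add iφ iψ, swφ, swφ']
    have e1 : ∫ p, φ p ∂π = (∫ u, u^2/(s₂^2+u^2) ∂μ) * (∫ u, (s₁^2+u^2)⁻¹ ∂μ) :=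
      integral_prod_mul (fun u : ℝ => u^2/(s₂^2+u^2)) (fun v : ℝ => (s₁^2+v^2)⁻¹)
    have e2 : ∫ p, φ' p ∂π = (∫ u, u^2/(s₁^2+u^2) ∂μ) * (∫ u, (s₂^2+u^2)⁻¹ ∂μ) :=
      integral_prod_mul (fun u : ℝ => u^2/(s₁^2+u^2)) (fun v : ℝ => (s₂^2+v^2)⁻¹)
    rw [e1, e2]; ring
  linarith [hδpos, hint.le, hint.ge]

lemma aux_filterlim0 {g : ℝ → ℝ≥0∞} {L : ℝ≥0∞}
    (hanti : ∀ s₁ s₂ : ℝ, 0 < s₁ → s₁ ≤ s₂ → g s₂ ≤ g s₁)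
    (hbound : ∀ s : ℝ, 0 < s → g s ≤ L)
    (hseq : Tendsto (fun n : ℕ => g (1/(n+1))) atTop (𝓝 L)) :
    Tendsto g (𝓝[>] (0:ℝ)) (𝓝 L) := by
  rw [tendsto_order]
  constructor
  · intro a ha
    obtain ⟨n, hn⟩ := (hseq.eventually (eventually_gt_nhds ha)).exists
    have hpos : (0:ℝ) < 1/(n+1) := by positivity
    filter_upwards [Ioo_mem_nhdsGT_of_mem (show (0:ℝ) ∈ Ico (0:ℝ) (1/(n+1)) from ⟨le_rfl, hpos⟩)]
      with s hs
    exact lt_of_lt_of_le hn (hanti s (1/(n+1)) hs.1 hs.2.le)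
  · intro a ha
    filter_upwards [self_mem_nhdsWithin] with s hs
    exact lt_of_le_of_lt (hbound s hs) ha

lemma aux_filterlimtop {g : ℝ → ℝ≥0∞} {L : ℝ≥0∞}
    (hmono : ∀ s₁ s₂ : ℝ, 0 < s₁ → s₁ ≤ s₂ → g s₁ ≤ g s₂)
    (hbound : ∀ s : ℝ, 0 < s → g s ≤ L)
    (hseq : Tendsto (fun n : ℕ => g (n+1)) atTop (𝓝 L)) :
    Tendsto g atTop (𝓝 L) := by
  rw [tendsto_order]
  constructor
  · intro a ha
    obtain ⟨n, hn⟩ := (hseq.eventually (eventually_gt_nhds ha)).exists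
    filter_upwards [eventually_ge_atTop ((n:ℝ)+1)] with s hs
    exact lt_of_lt_of_le hn (hmono ((n:ℝ)+1) s (by positivity) hs)
  · intro a ha
    filter_upwards [eventually_ge_atTop (1:ℝ)] with s hs
    exact lt_of_le_of_lt (hbound s (by linarith)) ha

lemma aux_Glim (μ : Measure ℝ) [IsProbabilityMeasure μ] :
    Tendsto (fun s : ℝ => ∫⁻ u, ENNReal.ofReal ((s^2+u^2)⁻¹) ∂μ) (𝓝[>] (0:ℝ))
      (𝓝 (∫⁻ u, (ENNReal.ofReal (u^2))⁻¹ ∂μ)) := by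
  apply aux_filterlim0
  · intro s₁ s₂ hs₁ h12
    apply lintegral_mono fun u => ?_
    apply ENNReal.ofReal_le_ofReal
    have h1 : (0:ℝ) < s₁^2 + u^2 := by positivity
    exact inv_anti₀ h1 (by nlinarith)
  · intro s hs
    apply lintegral_mono fun u => ?_
    rw [ENNReal.le_inv_iff_mul_le, ← ENNReal.ofReal_mul (by positivity)]
    apply ENNReal.ofReal_le_one.mpr
    rw [inv_mul_eq_div, div_le_one (by positivity)]
    nlinarith
  · apply lintegral_tendsto_of_tendsto_of_monotone
    · intro n
      apply Continuous.aemeasurable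
      apply ENNReal.continuous_ofReal.comp
      apply Continuous.inv₀ (by continuity)
      intro u; positivity
    · filter_upwards with u
      intro n m hnm
      apply ENNReal.ofReal_le_ofReal
      have h1 : (0:ℝ) < (1/(m+1))^2 + u^2 := by positivity
      apply inv_anti₀ h1
      have : (1:ℝ)/(m+1) ≤ 1/(n+1) := by
        apply one_div_le_one_div_of_le (by positivity)
        have : (n:ℝ) ≤ (m:ℝ) := Nat.cast_le.mpr hnm
        linarith
      nlinarith [one_div_pos.mpr (show (0:ℝ) < (m:ℝ)+1 by positivity)]
    · filter_upwards with u
      have heq : ∀ n : ℕ, ENNReal.ofReal (((1/((n:ℝ)+1))^2 + u^2)⁻¹)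
          = (ENNReal.ofReal ((1/((n:ℝ)+1))^2 + u^2))⁻¹ := by
        intro n
        exact ENNReal.ofReal_inv_of_pos (by positivity)
      simp_rw [heq]
      apply ENNReal.tendsto_inv_iff.mpr
      have hreal : Tendsto (fun n : ℕ => (1/((n:ℝ)+1))^2 + u^2) atTop (𝓝 (u^2)) := by
        have h0 : Tendsto (fun n : ℕ => 1/((n:ℝ)+1)) atTop (𝓝 0) :=
          tendsto_one_div_add_atTop_nhds_zero_nat
        have := (h0.pow 2).add (tendsto_const_nhds (x := u^2))
        simpa using this
      exact (ENNReal.continuous_ofReal.tendsto _).comp hreal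

lemma aux_Nlim0 (μ : Measure ℝ) [IsProbabilityMeasure μ] :
    Tendsto (fun s : ℝ => ∫⁻ u, ENNReal.ofReal (u^2/(s^2+u^2)) ∂μ) (𝓝[>] (0:ℝ))
      (𝓝 (μ {(0:ℝ)}ᶜ)) := by
  set S : Set ℝ := {(0:ℝ)}ᶜ with hS
  set F : ℝ → ℝ≥0∞ := S.indicator (fun _ => (1:ℝ≥0∞)) with hF
  have hind : ∫⁻ u, F u ∂μ = μ S := by
    rw [hF, lintegral_indicator_const (measurableSet_singleton (0:ℝ)).compl, one_mul]
  have hle : ∀ (s u : ℝ), ENNReal.ofReal (u^2/(s^2+u^2)) ≤ F u := by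
    intro s u
    by_cases hu : u = 0
    · subst hu; simp
    · rw [hF, Set.indicator_of_mem (by simp [hS, hu])]
      apply ENNReal.ofReal_le_one.mpr
      rcases eq_or_ne (s^2+u^2) 0 with h0 | h0
      · simp [h0]
      · rw [div_le_one (lt_of_le_of_ne (by positivity) (Ne.symm h0))]
        nlinarith [sq_nonneg s]
  rw [← hind]
  apply aux_filterlim0
  · intro s₁ s₂ hs₁ h12
    apply lintegral_mono fun u => ?_
    apply ENNReal.ofReal_le_ofReal
    have hs₂ : (0:ℝ) < s₂ := lt_of_lt_of_le hs₁ h12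
    have h1 : (0:ℝ) < s₁^2 + u^2 := by positivity
    have h2 : (0:ℝ) < s₂^2 + u^2 := by positivity
    rw [div_le_div_iff₀ h2 h1]
    nlinarith [mul_le_mul_of_nonneg_left (show s₁^2 ≤ s₂^2 by nlinarith) (sq_nonneg u)]
  · intro s hs
    exact lintegral_mono fun u => hle s u
  · apply lintegral_tendsto_of_tendsto_of_monotone
    · intro n
      apply Continuous.aemeasurable
      apply ENNReal.continuous_ofReal.comp
      apply Continuous.div (by continuity) (by continuity)
      intro u
      have hn1 : (0:ℝ) < (n:ℝ)+1 := by positivity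
      positivity
    · filter_upwards with u
      intro n m hnm
      apply ENNReal.ofReal_le_ofReal
      have hc : (n:ℝ) ≤ (m:ℝ) := Nat.cast_le.mpr hnm
      have hn1 : (0:ℝ) < (n:ℝ)+1 := by positivity
      have hm1 : (0:ℝ) < (m:ℝ)+1 := by positivity
      have h1 : (0:ℝ) < (1/((n:ℝ)+1))^2 + u^2 := by positivity
      have h2 : (0:ℝ) < (1/((m:ℝ)+1))^2 + u^2 := by positivity
      rw [div_le_div_iff₀ h1 h2]
      have hd : (1:ℝ)/((m:ℝ)+1) ≤ 1/((n:ℝ)+1) := by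
        apply one_div_le_one_div_of_le hn1; linarith
      have hd2 : ((1:ℝ)/((m:ℝ)+1))^2 ≤ (1/((n:ℝ)+1))^2 := by
        nlinarith [one_div_pos.mpr hm1]
      nlinarith [mul_le_mul_of_nonneg_left hd2 (sq_nonneg u)]
    · filter_upwards with u
      by_cases hu : u = 0
      · subst hu
        have : ∀ n : ℕ, ENNReal.ofReal ((0:ℝ)^2/((1/((n:ℝ)+1))^2 + (0:ℝ)^2)) = 0 := by
          intro n; norm_num
        simp only [this]
        have : F 0 = 0 := by rw [hF, Set.indicator_of_notMem (by simp [hS])]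
        rw [this]
        exact tendsto_const_nhds
      · have hFu : F u = 1 := by rw [hF, Set.indicator_of_mem (by simp [hS, hu])]
        rw [hFu]
        have hreal : Tendsto (fun n : ℕ => u^2/((1/((n:ℝ)+1))^2 + u^2)) atTop (𝓝 1) := by
          have h0 : Tendsto (fun n : ℕ => (1/((n:ℝ)+1))^2 + u^2) atTop (𝓝 (u^2)) := by
            have h0' : Tendsto (fun n : ℕ => 1/((n:ℝ)+1)) atTop (𝓝 0) :=
              tendsto_one_div_add_atTop_nhds_zero_nat
            have := (h0'.pow 2).add (tendsto_const_nhds (x := u^2))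
            simpa using this
          have hu2 : (u:ℝ)^2 ≠ 0 := pow_ne_zero 2 hu
          have := (tendsto_const_nhds (x := u^2) (f := atTop (α := ℕ))).div h0 hu2
          rw [div_self hu2] at this; exact this
        have := (ENNReal.continuous_ofReal.tendsto _).comp hreal
        simpa [Function.comp_def] using this

lemma aux_lim0 (μ : Measure ℝ) [IsProbabilityMeasure μ] :
    Tendsto (fun s : ℝ => (∫⁻ u, ENNReal.ofReal (u^2/(s^2+u^2)) ∂μ)
        / (∫⁻ u, ENNReal.ofReal ((s^2+u^2)⁻¹) ∂μ)) (𝓝[>] (0:ℝ))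
      (𝓝 (∫⁻ u, (ENNReal.ofReal (u^2))⁻¹ ∂μ)⁻¹) := by
  set L1 := ∫⁻ u, (ENNReal.ofReal (u^2))⁻¹ ∂μ with hL1
  rcases eq_or_ne L1 ⊤ with htop | htop
  · -- L1 = ∞ : squeeze between 0 and 1/G
    rw [htop, ENNReal.inv_top]
    have hGtop : Tendsto (fun s : ℝ => ∫⁻ u, ENNReal.ofReal ((s^2+u^2)⁻¹) ∂μ)
        (𝓝[>] (0:ℝ)) (𝓝 ⊤) := htop ▸ aux_Glim μ
    have h2 : Tendsto (fun s : ℝ => 1 / ∫⁻ u, ENNReal.ofReal ((s^2+u^2)⁻¹) ∂μ)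
        (𝓝[>] (0:ℝ)) (𝓝 (0:ℝ≥0∞)) := by
      have := ENNReal.Tendsto.const_div (a := 1) hGtop (Or.inr ENNReal.one_ne_top)
      simpa using this
    apply tendsto_of_tendsto_of_tendsto_of_le_of_le tendsto_const_nhds h2
    · intro s; exact zero_le
    · intro s
      apply ENNReal.div_le_div_right
      calc ∫⁻ u, ENNReal.ofReal (u^2/(s^2+u^2)) ∂μ ≤ ∫⁻ _, 1 ∂μ := by
            apply lintegral_mono fun u => ?_
            apply ENNReal.ofReal_le_one.mpr
            rcases eq_or_ne (s^2+u^2) 0 with h0 | h0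
            · simp [h0]
            · rw [div_le_one (lt_of_le_of_ne (by positivity) (Ne.symm h0))]
              nlinarith [sq_nonneg s]
        _ = 1 := by simp
  · -- L1 < ∞
    have hμ0 : μ {(0:ℝ)} = 0 := by
      by_contra h0
      apply htop
      rw [hL1, eq_top_iff]
      calc (⊤:ℝ≥0∞) = ⊤ * μ {(0:ℝ)} := (ENNReal.top_mul h0).symm
        _ = ∫⁻ u, ({(0:ℝ)} : Set ℝ).indicator (fun _ => (⊤:ℝ≥0∞)) u ∂μ := by
            rw [lintegral_indicator_const (measurableSet_singleton (0:ℝ))]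
        _ ≤ ∫⁻ u, (ENNReal.ofReal (u^2))⁻¹ ∂μ := by
            apply lintegral_mono fun u => ?_
            by_cases hu : u = 0
            · subst hu; simp
            · simp [Set.indicator_of_notMem, hu]
    have hcompl : μ {(0:ℝ)}ᶜ = 1 := by
      rw [prob_compl_eq_one_sub (measurableSet_singleton (0:ℝ)), hμ0, tsub_zero]
    have hL1pos : L1 ≠ 0 := by
      rw [hL1]
      rw [← pos_iff_ne_zero, lintegral_pos_iff_support]
      · have : Function.support (fun u : ℝ => (ENNReal.ofReal (u^2))⁻¹) = univ := by
          ext u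
          simp only [Function.mem_support, mem_univ, iff_true, ne_eq, ENNReal.inv_eq_zero]
          exact ENNReal.ofReal_ne_top
        rw [this]; simp
      · exact (ENNReal.measurable_ofReal.comp (measurable_id.pow_const 2)).inv
    have hN : Tendsto (fun s : ℝ => ∫⁻ u, ENNReal.ofReal (u^2/(s^2+u^2)) ∂μ)
        (𝓝[>] (0:ℝ)) (𝓝 1) := hcompl ▸ aux_Nlim0 μ
    have := ENNReal.Tendsto.div hN (Or.inl one_ne_zero) (aux_Glim μ) (Or.inl htop)
    simpa [one_div] using this

lemma aux_Qlim (μ : Measure ℝ) [IsProbabilityMeasure μ] :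
    Tendsto (fun s : ℝ => ∫⁻ u, ENNReal.ofReal (s^2/(s^2+u^2)) ∂μ) atTop (𝓝 1) := by
  have hone : ∫⁻ _ : ℝ, (1:ℝ≥0∞) ∂μ = 1 := by simp
  rw [← hone]
  apply aux_filterlimtop
  · intro s₁ s₂ hs₁ h12
    apply lintegral_mono fun u => ?_
    apply ENNReal.ofReal_le_ofReal
    have hs₂ : (0:ℝ) < s₂ := lt_of_lt_of_le hs₁ h12
    have h1 : (0:ℝ) < s₁^2 + u^2 := by positivity
    have h2 : (0:ℝ) < s₂^2 + u^2 := by positivity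
    rw [div_le_div_iff₀ h1 h2]
    nlinarith [mul_le_mul_of_nonneg_left (show s₁^2 ≤ s₂^2 by nlinarith) (sq_nonneg u)]
  · intro s hs
    apply lintegral_mono fun u => ?_
    apply ENNReal.ofReal_le_one.mpr
    rw [div_le_one (by positivity)]
    nlinarith [sq_nonneg u]
  · apply lintegral_tendsto_of_tendsto_of_monotone
    · intro n
      apply Continuous.aemeasurable
      apply ENNReal.continuous_ofReal.comp
      apply Continuous.div (by continuity) (by continuity)
      intro u
      have hn1 : (0:ℝ) < (n:ℝ)+1 := by positivity
      positivity
    · filter_upwards with u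
      intro n m hnm
      apply ENNReal.ofReal_le_ofReal
      have hc : (n:ℝ) ≤ (m:ℝ) := Nat.cast_le.mpr hnm
      have hn1 : (0:ℝ) < (n:ℝ)+1 := by positivity
      have hm1 : (0:ℝ) < (m:ℝ)+1 := by positivity
      have h1 : (0:ℝ) < ((n:ℝ)+1)^2 + u^2 := by positivity
      have h2 : (0:ℝ) < ((m:ℝ)+1)^2 + u^2 := by positivity
      rw [div_le_div_iff₀ h1 h2]
      nlinarith [mul_le_mul_of_nonneg_left (show ((n:ℝ)+1)^2 ≤ ((m:ℝ)+1)^2 by nlinarith)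
        (sq_nonneg u)]
    · filter_upwards with u
      have hreal : Tendsto (fun n : ℕ => ((n:ℝ)+1)^2/(((n:ℝ)+1)^2 + u^2)) atTop (𝓝 1) := by
        have hr : Tendsto (fun n : ℕ => u^2/(((n:ℝ)+1)^2 + u^2)) atTop (𝓝 0) := by
          apply squeeze_zero (fun n => by positivity) (g := fun n : ℕ => u^2 * (((n:ℝ)+1)^2)⁻¹)
          · intro n
            have hn1 : (0:ℝ) < (n:ℝ)+1 := by positivity
            rw [div_eq_mul_inv]
            apply mul_le_mul_of_nonneg_left _ (sq_nonneg u)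
            apply inv_anti₀ (by positivity)
            nlinarith [sq_nonneg u]
          · have h2 : Tendsto (fun n : ℕ => (((n:ℝ)+1)^2)⁻¹) atTop (𝓝 0) := by
              apply Tendsto.comp tendsto_inv_atTop_zero
              apply Tendsto.comp (tendsto_pow_atTop two_ne_zero)
              exact tendsto_atTop_add_const_right atTop 1 tendsto_natCast_atTop_atTop
            have := h2.const_mul (u^2)
            simpa using this
        have heq : ∀ n : ℕ, ((n:ℝ)+1)^2/(((n:ℝ)+1)^2 + u^2)
            = 1 - u^2/(((n:ℝ)+1)^2 + u^2) := by
          intro n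
          have hn1 : (0:ℝ) < (n:ℝ)+1 := by positivity
          have hd : (0:ℝ) < ((n:ℝ)+1)^2 + u^2 := by positivity
          field_simp
          ring
        simp_rw [heq]
        have := (tendsto_const_nhds (x := (1:ℝ)) (f := atTop (α := ℕ))).sub hr
        simpa using this
      have := (ENNReal.continuous_ofReal.tendsto _).comp hreal
      simpa [Function.comp_def] using this

lemma aux_Plim (μ : Measure ℝ) [IsProbabilityMeasure μ] :
    Tendsto (fun s : ℝ => ∫⁻ u, ENNReal.ofReal (s^2*u^2/(s^2+u^2)) ∂μ) atTop
      (𝓝 (∫⁻ u, ENNReal.ofReal (u^2) ∂μ)) := by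
  apply aux_filterlimtop
  · intro s₁ s₂ hs₁ h12
    apply lintegral_mono fun u => ?_
    apply ENNReal.ofReal_le_ofReal
    have hs₂ : (0:ℝ) < s₂ := lt_of_lt_of_le hs₁ h12
    have h1 : (0:ℝ) < s₁^2 + u^2 := by positivity
    have h2 : (0:ℝ) < s₂^2 + u^2 := by positivity
    rw [div_le_div_iff₀ h1 h2]
    have hss : s₁^2 ≤ s₂^2 := by nlinarith
    nlinarith [mul_le_mul_of_nonneg_left hss (mul_nonneg (sq_nonneg u) (sq_nonneg u))]
  · intro s hs
    apply lintegral_mono fun u => ?_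
    apply ENNReal.ofReal_le_ofReal
    rcases eq_or_ne u 0 with rfl | hu
    · simp
    · rw [div_le_iff₀ (by positivity)]
      nlinarith [sq_nonneg u, sq_nonneg s]
  · apply lintegral_tendsto_of_tendsto_of_monotone
    · intro n
      apply Continuous.aemeasurable
      apply ENNReal.continuous_ofReal.comp
      apply Continuous.div (by continuity) (by continuity)
      intro u
      have hn1 : (0:ℝ) < (n:ℝ)+1 := by positivity
      positivity
    · filter_upwards with u
      intro n m hnm
      apply ENNReal.ofReal_le_ofReal
      have hc : (n:ℝ) ≤ (m:ℝ) := Nat.cast_le.mpr hnm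
      have hn1 : (0:ℝ) < (n:ℝ)+1 := by positivity
      have hm1 : (0:ℝ) < (m:ℝ)+1 := by positivity
      have h1 : (0:ℝ) < ((n:ℝ)+1)^2 + u^2 := by positivity
      have h2 : (0:ℝ) < ((m:ℝ)+1)^2 + u^2 := by positivity
      rw [div_le_div_iff₀ h1 h2]
      have hss : ((n:ℝ)+1)^2 ≤ ((m:ℝ)+1)^2 := by nlinarith
      nlinarith [mul_le_mul_of_nonneg_left hss (mul_nonneg (sq_nonneg u) (sq_nonneg u))]
    · filter_upwards with u
      have hr : Tendsto (fun n : ℕ => u^2/(((n:ℝ)+1)^2 + u^2)) atTop (𝓝 0) := by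
        apply squeeze_zero (fun n => by positivity) (g := fun n : ℕ => u^2 * (((n:ℝ)+1)^2)⁻¹)
        · intro n
          have hn1 : (0:ℝ) < (n:ℝ)+1 := by positivity
          rw [div_eq_mul_inv]
          apply mul_le_mul_of_nonneg_left _ (sq_nonneg u)
          apply inv_anti₀ (by positivity)
          nlinarith [sq_nonneg u]
        · have h2 : Tendsto (fun n : ℕ => (((n:ℝ)+1)^2)⁻¹) atTop (𝓝 0) := by
            apply Tendsto.comp tendsto_inv_atTop_zero
            apply Tendsto.comp (tendsto_pow_atTop two_ne_zero)
            exact tendsto_atTop_add_const_right atTop 1 tendsto_natCast_atTop_atTop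
          have := h2.const_mul (u^2)
          simpa using this
      have hreal : Tendsto (fun n : ℕ => ((n:ℝ)+1)^2*u^2/(((n:ℝ)+1)^2 + u^2)) atTop
          (𝓝 (u^2)) := by
        have heq : ∀ n : ℕ, ((n:ℝ)+1)^2*u^2/(((n:ℝ)+1)^2 + u^2)
            = u^2 - u^2 * (u^2/(((n:ℝ)+1)^2 + u^2)) := by
          intro n
          have hn1 : (0:ℝ) < (n:ℝ)+1 := by positivity
          have hd : (0:ℝ) < ((n:ℝ)+1)^2 + u^2 := by positivity
          field_simp
          ring
        simp_rw [heq]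
        have := (tendsto_const_nhds (x := u^2) (f := atTop (α := ℕ))).sub (hr.const_mul (u^2))
        simpa using this
      have := (ENNReal.continuous_ofReal.tendsto _).comp hreal
      simpa [Function.comp_def] using this

lemma aux_limtop (μ : Measure ℝ) [IsProbabilityMeasure μ] :
    Tendsto (fun s : ℝ => (∫⁻ u, ENNReal.ofReal (u^2/(s^2+u^2)) ∂μ)
        / (∫⁻ u, ENNReal.ofReal ((s^2+u^2)⁻¹) ∂μ)) atTop
      (𝓝 (∫⁻ u, ENNReal.ofReal (u^2) ∂μ)) := by
  have hPQ := ENNReal.Tendsto.div (aux_Plim μ) (Or.inr one_ne_zero) (aux_Qlim μ)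
    (Or.inl ENNReal.one_ne_top)
  rw [div_one] at hPQ
  apply hPQ.congr'
  filter_upwards [eventually_gt_atTop (0:ℝ)] with s hs
  have hc0 : ENNReal.ofReal (s^2) ≠ 0 := by
    simp only [ne_eq, ENNReal.ofReal_eq_zero, not_le]; positivity
  have hct : ENNReal.ofReal (s^2) ≠ ⊤ := ENNReal.ofReal_ne_top
  have hP : ∫⁻ u, ENNReal.ofReal (s^2*u^2/(s^2+u^2)) ∂μ
      = ENNReal.ofReal (s^2) * ∫⁻ u, ENNReal.ofReal (u^2/(s^2+u^2)) ∂μ := by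
    rw [← lintegral_const_mul' _ _ hct]
    apply lintegral_congr fun u => ?_
    rw [← ENNReal.ofReal_mul (by positivity)]
    congr 1
    rw [mul_div_assoc]
  have hQ : ∫⁻ u, ENNReal.ofReal (s^2/(s^2+u^2)) ∂μ
      = ENNReal.ofReal (s^2) * ∫⁻ u, ENNReal.ofReal ((s^2+u^2)⁻¹) ∂μ := by
    rw [← lintegral_const_mul' _ _ hct]
    apply lintegral_congr fun u => ?_
    rw [← ENNReal.ofReal_mul (by positivity)]
    congr 1
  rw [hP, hQ, ENNReal.mul_div_mul_left _ _ hc0 hct]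

lemma aux_contBOn (μ : Measure ℝ) [IsProbabilityMeasure μ] :
    ContinuousOn (fun s : ℝ => ∫ u, (s^2+u^2)⁻¹ ∂μ) (Ioi 0) := by
  intro s₀ hs₀
  apply ContinuousAt.continuousWithinAt
  have hs₀' : (0:ℝ) < s₀ := hs₀
  have hnb : Ioi (s₀/2) ∈ 𝓝 s₀ := Ioi_mem_nhds (by linarith)
  apply continuousAt_of_dominated (bound := fun _ : ℝ => ((s₀/2)^2)⁻¹)
  · filter_upwards [hnb] with s hs
    apply Continuous.aestronglyMeasurable
    apply Continuous.inv₀ (by continuity)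
    intro u
    have : (0:ℝ) < s := lt_trans (by linarith) hs
    positivity
  · filter_upwards [hnb] with s hs
    filter_upwards with u
    have h2 : (0:ℝ) < s₀/2 := by linarith
    have hss : s₀/2 < s := hs
    rw [Real.norm_eq_abs, abs_of_nonneg (by positivity)]
    apply inv_anti₀ (by positivity)
    nlinarith [sq_nonneg u]
  · exact integrable_const _
  · filter_upwards with u
    apply ContinuousAt.inv₀ (by fun_prop)
    positivity

theorem stmt6 (μ : Measure ℝ) [IsProbabilityMeasure μ] (hμ : μ (Iio 0) = 0)
    (hnd : ∀ c : ℝ, μ ≠ Measure.dirac c)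
    (h : ℝ → ℝ) (hdef : ∀ s : ℝ, h s = ∫ u, s / (s ^ 2 + u ^ 2) ∂μ)
    (k : ℝ → ℝ → ℝ) (kdef : ∀ s t : ℝ, k s t = (s - t) * (1 / h s - s + t)) :
    StrictMonoOn (fun s => k s 0) (Ioi 0) ∧
      Set.BijOn (fun s => ENNReal.ofReal (k s 0)) (Ioi (0 : ℝ))
        (Ioo (((∫⁻ u, ENNReal.ofReal u ^ (-2 : ℝ) ∂μ) ^ (-(1 / 2) : ℝ)) ^ 2)
             (((∫⁻ u, ENNReal.ofReal u ^ (2 : ℝ) ∂μ) ^ ((1 / 2) : ℝ)) ^ 2)) := by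
  have hd : ∀ c : ℝ, μ {c}ᶜ = 0 → μ = Measure.dirac c := fun c hc => aux_dirac μ hc
  have hoff := aux_offdiag μ hd hnd
  have hae0 : ∀ᵐ u ∂μ, 0 ≤ u := by
    have hset : {u : ℝ | ¬ 0 ≤ u} = Iio 0 := by ext u; simp [not_le]
    exact ae_iff.mpr (by rw [hset]; exact hμ)
  -- real-valued facts
  have hkval : ∀ s : ℝ, s ∈ Ioi (0:ℝ) →
      k s 0 = (∫ u, u^2/(s^2+u^2) ∂μ) / (∫ u, (s^2+u^2)⁻¹ ∂μ) :=
    fun s hs => aux_fval μ h hdef k kdef hs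
  have hmonoR : StrictMonoOn (fun s => k s 0) (Ioi 0) := by
    intro s₁ h1 s₂ h2 h12
    simp only
    rw [hkval s₁ h1, hkval s₂ h2,
      div_lt_div_iff₀ (aux_Bpos μ h1) (aux_Bpos μ h2)]
    exact aux_mono μ hμ hoff (fun hs => aux_intA μ hs) (fun hs => aux_intB μ hs) h1 h12
  have hpos : ∀ s : ℝ, s ∈ Ioi (0:ℝ) → 0 < k s 0 := by
    intro s hs
    rw [hkval s hs]
    exact div_pos (aux_Apos μ hd hnd hs) (aux_Bpos μ hs)
  -- continuity
  have hcont : ContinuousOn (fun s => k s 0) (Ioi (0:ℝ)) := by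
    have hc2 : ContinuousOn (fun s : ℝ => (∫ u, (s^2+u^2)⁻¹ ∂μ)⁻¹ - s^2) (Ioi 0) := by
      apply ContinuousOn.sub
      · exact (aux_contBOn μ).inv₀ fun s hs => (aux_Bpos μ hs).ne'
      · exact (continuous_pow 2).continuousOn
    apply hc2.congr
    intro s hs
    show k s 0 = _
    rw [hkval s hs]
    have hsum := aux_sum μ (show (0:ℝ) < s from hs)
    have hB := (aux_Bpos μ (show (0:ℝ) < s from hs)).ne'
    have hA : (∫ u, u^2/(s^2+u^2) ∂μ) = 1 - s^2 * ∫ u, (s^2+u^2)⁻¹ ∂μ := by linarith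
    rw [hA, sub_div, mul_div_assoc, div_self hB, mul_one, one_div]
  -- ENNReal picture
  set NN : ℝ → ℝ≥0∞ := fun s => ∫⁻ u, ENNReal.ofReal (u^2/(s^2+u^2)) ∂μ with hNN
  set GG : ℝ → ℝ≥0∞ := fun s => ∫⁻ u, ENNReal.ofReal ((s^2+u^2)⁻¹) ∂μ with hGG
  set F : ℝ → ℝ≥0∞ := fun s => ENNReal.ofReal (k s 0) with hF
  have hFeq : ∀ s : ℝ, s ∈ Ioi (0:ℝ) → F s = NN s / GG s := by
    intro s hs
    rw [hF]
    simp only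
    rw [hkval s hs, ENNReal.ofReal_div_of_pos (aux_Bpos μ hs), hNN, hGG]
    simp only
    rw [ofReal_integral_eq_lintegral_ofReal (aux_intA μ hs)
        (Eventually.of_forall fun u => by positivity),
      ofReal_integral_eq_lintegral_ofReal (aux_intB μ hs)
        (Eventually.of_forall fun u => by positivity)]
  have hFmono : StrictMonoOn F (Ioi (0:ℝ)) := by
    intro s₁ h1 s₂ h2 h12
    exact (ENNReal.ofReal_lt_ofReal_iff (hpos s₂ h2)).mpr (hmonoR h1 h2 h12)
  set L1 : ℝ≥0∞ := ∫⁻ u, (ENNReal.ofReal (u^2))⁻¹ ∂μ with hL1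
  set L2 : ℝ≥0∞ := ∫⁻ u, ENNReal.ofReal (u^2) ∂μ with hL2
  have hFlim0 : Tendsto F (𝓝[>] (0:ℝ)) (𝓝 L1⁻¹) := by
    apply (aux_lim0 μ).congr'
    filter_upwards [self_mem_nhdsWithin] with s hs
    exact (hFeq s hs).symm
  have hFlimtop : Tendsto F atTop (𝓝 L2) := by
    apply (aux_limtop μ).congr'
    filter_upwards [eventually_gt_atTop (0:ℝ)] with s hs
    exact (hFeq s hs).symm
  -- endpoints
  have hlow : ((∫⁻ u, ENNReal.ofReal u ^ (-2 : ℝ) ∂μ) ^ (-(1 / 2) : ℝ)) ^ 2 = L1⁻¹ := by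
    have hi : ∫⁻ u, ENNReal.ofReal u ^ (-2 : ℝ) ∂μ = L1 := by
      apply lintegral_congr_ae
      filter_upwards [hae0] with u hu
      rw [show (-2:ℝ) = -(2:ℝ) by norm_num, ENNReal.rpow_neg]
      congr 1
      rw [show ((2:ℝ)) = ((2:ℕ):ℝ) by norm_num, ENNReal.rpow_natCast, ← ENNReal.ofReal_pow hu]
    rw [hi, ← ENNReal.rpow_natCast (L1 ^ (-(1/2):ℝ)) 2, ← ENNReal.rpow_mul]
    norm_num
    exact ENNReal.rpow_neg_one L1
  have hhigh : ((∫⁻ u, ENNReal.ofReal u ^ (2 : ℝ) ∂μ) ^ ((1 / 2) : ℝ)) ^ 2 = L2 := by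
    have hi : ∫⁻ u, ENNReal.ofReal u ^ (2 : ℝ) ∂μ = L2 := by
      apply lintegral_congr_ae
      filter_upwards [hae0] with u hu
      rw [show ((2:ℝ)) = ((2:ℕ):ℝ) by norm_num, ENNReal.rpow_natCast, ← ENNReal.ofReal_pow hu]
    rw [hi, ← ENNReal.rpow_natCast (L2 ^ ((1/2):ℝ)) 2, ← ENNReal.rpow_mul]
    norm_num
  rw [hlow, hhigh]
  refine ⟨hmonoR, ?_, hFmono.injOn, ?_⟩
  · -- MapsTo
    intro s hs
    have hs' : (0:ℝ) < s := hs
    constructor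
    · have hhalf : s/2 ∈ Ioi (0:ℝ) := by simp; linarith
      have hle : L1⁻¹ ≤ F (s/2) := by
        apply le_of_tendsto hFlim0
        filter_upwards [Ioo_mem_nhdsGT_of_mem
          (show (0:ℝ) ∈ Ico (0:ℝ) (s/2) from ⟨le_rfl, by linarith⟩)] with t ht
        exact (hFmono ht.1 hhalf ht.2).le
      exact lt_of_le_of_lt hle (hFmono hhalf hs (by linarith))
    · have hs1 : s+1 ∈ Ioi (0:ℝ) := by simp; linarith
      have hge : F (s+1) ≤ L2 := by
        apply ge_of_tendsto hFlimtop
        filter_upwards [eventually_ge_atTop (s+1)] with t ht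
        exact hFmono.monotoneOn hs1 (show t ∈ Ioi (0:ℝ) by simp; linarith) ht
      exact lt_of_lt_of_le (hFmono hs hs1 (by linarith)) hge
  · -- SurjOn
    intro y hy
    have hytop : y ≠ ⊤ := hy.2.ne_top
    have hypos : 0 < y := lt_of_le_of_lt zero_le hy.1
    have hy'pos : 0 < y.toReal := ENNReal.toReal_pos hypos.ne' hytop
    obtain ⟨s₁, hFs₁, hs₁⟩ :=
      ((hFlim0.eventually_lt_const hy.1).and self_mem_nhdsWithin).exists
    obtain ⟨s₂, hFs₂, hs₂⟩ :=
      ((hFlimtop.eventually_const_lt hy.2).and (eventually_gt_atTop s₁)).exists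
    have hs₁' : (0:ℝ) < s₁ := hs₁
    have hy1 : k s₁ 0 < y.toReal := by
      rw [← ENNReal.ofReal_toReal hytop] at hFs₁
      exact (ENNReal.ofReal_lt_ofReal_iff hy'pos).mp hFs₁
    have hy2 : y.toReal < k s₂ 0 := by
      rw [← ENNReal.ofReal_toReal hytop] at hFs₂
      exact (ENNReal.ofReal_lt_ofReal_iff (hpos s₂ (by simp; linarith))).mp hFs₂
    have hsub : Icc s₁ s₂ ⊆ Ioi (0:ℝ) := fun t ht => lt_of_lt_of_le hs₁' ht.1
    obtain ⟨s, hsmem, hfs⟩ := intermediate_value_Icc hs₂.le (hcont.mono hsub)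
      (⟨hy1.le, hy2.le⟩ : y.toReal ∈ Icc (k s₁ 0) (k s₂ 0))
    refine ⟨s, hsub hsmem, ?_⟩
    have hfs' : k s 0 = y.toReal := hfs
    show ENNReal.ofReal (k s 0) = y
    rw [hfs', ENNReal.ofReal_toReal hytop]
end

section
/- Let μ be a probability measure on [0,∞) not a Dirac measure, and for t > 0 let s(λ,t) denote the unique s ∈ (t,∞) with k(s,t) = λ², where k(s,t) = (s−t)(1/h(s) − s + t) and h(s) = ∫₀^∞ s/(s²+u²) dμ(u). Then for every fixed λ > 0, one has 0 < s(λ,t) − t < λ²/t for all t > 0; in particular s(λ,t) − t → 0 as t → ∞. -/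
open MeasureTheory Set Filter

lemma dirac_of_singleton_full (μ : Measure ℝ) [IsProbabilityMeasure μ]
    (h0 : μ ({0}ᶜ : Set ℝ) = 0) : μ = Measure.dirac 0 := by
  ext A hA
  rw [Measure.dirac_apply' _ hA]
  have h1 : μ (A \ {0}) = 0 := measure_mono_null (diff_subset_compl A {0}) h0
  have h2 : μ (A ∩ {0}) + μ (A \ {0}) = μ A := measure_inter_add_diff A (measurableSet_singleton 0)
  have hs : μ ({0} : Set ℝ) = 1 := by
    have := prob_compl_eq_zero_iff (μ := μ) (measurableSet_singleton (0:ℝ))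
    exact this.mp h0
  by_cases h0A : (0:ℝ) ∈ A
  · have : A ∩ {0} = ({0} : Set ℝ) := by
      ext x; simp (config := {contextual := true}) [h0A]
    rw [this, hs] at h2
    rw [h1, add_zero] at h2
    rw [← h2]
    simp [indicator, h0A]
  · have : A ∩ {0} = (∅ : Set ℝ) := by
      ext x; simp (config := {contextual := true}); rintro hx rfl; exact h0A hx
    rw [this] at h2
    simp only [measure_empty, zero_add, h1] at h2
    rw [← h2]
    simp [indicator, h0A]

lemma h_bounds (μ : Measure ℝ) [IsProbabilityMeasure μ]
    (hnd : μ ≠ Measure.dirac 0) (S : ℝ) (hS : 0 < S) :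
    0 < ∫ u, S / (S ^ 2 + u ^ 2) ∂μ ∧ (∫ u, S / (S ^ 2 + u ^ 2) ∂μ) < 1 / S := by
  have hden : ∀ u : ℝ, 0 < S ^ 2 + u ^ 2 := fun u =>
    lt_of_lt_of_le (by positivity) (le_add_of_nonneg_right (sq_nonneg u))
  have hcont : Continuous fun u : ℝ => S / (S ^ 2 + u ^ 2) := by
    apply Continuous.div continuous_const (by continuity)
    intro u; exact (hden u).ne'
  have hint : Integrable (fun u : ℝ => S / (S ^ 2 + u ^ 2)) μ := by
    apply Integrable.mono' (integrable_const (1 / S)) hcont.aestronglyMeasurable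
    filter_upwards with u
    rw [Real.norm_eq_abs, abs_of_nonneg (by positivity)]
    rw [div_le_div_iff₀ (hden u) hS]
    nlinarith [sq_nonneg u]
  have hpos : ∀ u : ℝ, 0 < S / (S ^ 2 + u ^ 2) := fun u => by positivity
  constructor
  · rw [integral_pos_iff_support_of_nonneg (fun u => (hpos u).le) hint]
    have : Function.support (fun u : ℝ => S / (S ^ 2 + u ^ 2)) = univ := by
      ext u; simp only [Function.mem_support, mem_univ, iff_true]; exact (hpos u).ne'
    rw [this]
    simp
  · have hsub : (1 : ℝ) / S - ∫ u, S / (S ^ 2 + u ^ 2) ∂μ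
        = ∫ u, (1 / S - S / (S ^ 2 + u ^ 2)) ∂μ := by
      rw [integral_sub (integrable_const _) hint, integral_const]
      simp
    have hg : ∀ u : ℝ, 0 ≤ 1 / S - S / (S ^ 2 + u ^ 2) := by
      intro u
      rw [sub_nonneg, div_le_div_iff₀ (hden u) hS]
      nlinarith [sq_nonneg u]
    have hgsupp : Function.support (fun u : ℝ => 1 / S - S / (S ^ 2 + u ^ 2)) = {0}ᶜ := by
      ext u
      simp only [Function.mem_support, mem_compl_iff, mem_singleton_iff]
      constructor
      · rintro hne rfl
        apply hne
        rw [sub_eq_zero]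
        field_simp
        ring
      · intro hu
        rw [sub_ne_zero]
        intro heq
        apply hu
        rw [div_eq_div_iff hS.ne' (hden u).ne'] at heq
        nlinarith [sq_nonneg u, sq_abs u, abs_pos.mpr hu]
    have hμc : 0 < μ ({0}ᶜ : Set ℝ) := by
      rcases eq_or_lt_of_le (zero_le : 0 ≤ μ ({0}ᶜ : Set ℝ)) with he | hl
      · exact absurd (dirac_of_singleton_full μ he.symm) hnd
      · exact hl
    have : 0 < (1 : ℝ) / S - ∫ u, S / (S ^ 2 + u ^ 2) ∂μ := by
      rw [hsub, integral_pos_iff_support_of_nonneg hg]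
      · rw [hgsupp]; exact hμc
      · exact Integrable.sub (integrable_const _) hint
    linarith

theorem stmt7 (μ : Measure ℝ) [IsProbabilityMeasure μ] (hμ : μ (Iio 0) = 0)
    (hnd : ∀ c : ℝ, μ ≠ Measure.dirac c)
    (h : ℝ → ℝ) (hdef : ∀ s : ℝ, h s = ∫ u, s / (s ^ 2 + u ^ 2) ∂μ)
    (k : ℝ → ℝ → ℝ) (kdef : ∀ s t : ℝ, k s t = (s - t) * (1 / h s - s + t))
    (s : ℝ → ℝ → ℝ)
    (hsdef : ∀ lam t : ℝ, 0 < lam → 0 < t → s lam t ∈ Ioi t ∧ k (s lam t) t = lam ^ 2)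
    (lam : ℝ) (hlam : 0 < lam) :
    (∀ t : ℝ, 0 < t → 0 < s lam t - t ∧ s lam t - t < lam ^ 2 / t) ∧
      Tendsto (fun t => s lam t - t) atTop (nhds 0) := by
  have key : ∀ t : ℝ, 0 < t → 0 < s lam t - t ∧ s lam t - t < lam ^ 2 / t := by
    intro t ht
    obtain ⟨hmem, hk⟩ := hsdef lam t hlam ht
    have hst : t < s lam t := hmem
    have ha : 0 < s lam t - t := sub_pos.mpr hst
    have hS : 0 < s lam t := lt_trans ht hst
    obtain ⟨hh0, hh1⟩ := h_bounds μ (hnd 0) (s lam t) hS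
    rw [← hdef] at hh0 hh1
    have hinv : s lam t < 1 / h (s lam t) := by
      rw [lt_div_iff₀ hh0]
      calc s lam t * h (s lam t) < s lam t * (1 / s lam t) := by
            exact mul_lt_mul_of_pos_left hh1 hS
        _ = 1 := mul_one_div_cancel hS.ne'
    have hgt : lam ^ 2 > (s lam t - t) * t := by
      rw [← hk, kdef]
      apply mul_lt_mul_of_pos_left _ ha
      linarith
    refine ⟨ha, ?_⟩
    rw [lt_div_iff₀ ht]
    linarith
  refine ⟨key, ?_⟩
  have h1 : Tendsto (fun t : ℝ => lam ^ 2 / t) atTop (nhds 0) :=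
    tendsto_const_nhds.div_atTop tendsto_id
  apply tendsto_of_tendsto_of_tendsto_of_le_of_le' tendsto_const_nhds h1
  · filter_upwards [eventually_gt_atTop 0] with t ht
    exact (key t ht).1.le
  · filter_upwards [eventually_gt_atTop 0] with t ht
    exact (key t ht).2.le
end

section
/- Let μ be a probability measure on [0,∞) and define h(s) = ∫₀^∞ s/(s²+u²) dμ(u) for s > 0. Then for every p ∈ (0,2), ∫₀^∞ u^{-p} dμ(u) = (2/π)·sin(πp/2)·∫₀^∞ s^{-p} h(s) ds, as an identity in [0,∞]. -/
open MeasureTheory Set Real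

/-- `∫₀^∞ e^{-cx} dx = 1/c` at the `lintegral` level. -/
lemma lint_exp_aux {c : ℝ} (hc : 0 < c) :
    ∫⁻ x in Ioi (0:ℝ), ENNReal.ofReal (Real.exp (-(c * x))) = ENNReal.ofReal c⁻¹ := by
  rw [← ofReal_integral_eq_lintegral_ofReal]
  · congr 1
    have h := integral_exp_neg_mul_rpow (one_pos) hc
    simp only [rpow_one] at h
    rw [show (∫ x in Ioi (0:ℝ), Real.exp (-(c * x))) = ∫ x in Ioi (0:ℝ), Real.exp (-c * x) by
      simp [neg_mul], h]
    rw [show (-1 / 1 : ℝ) = -1 by norm_num, rpow_neg_one,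
      show (1/1 + 1 : ℝ) = 1 + 1 by norm_num, Real.Gamma_add_one one_ne_zero, Real.Gamma_one]
    ring
  · have h := exp_neg_integrableOn_Ioi 0 hc; simp only [neg_mul] at h; exact h
  · filter_upwards with x using (Real.exp_pos _).le

/-- Gaussian-type moment integral at the `lintegral` level. -/
lemma lint_gauss_aux {q x : ℝ} (hq : -1 < q) (hx : 0 < x) :
    ∫⁻ s in Ioi (0:ℝ), ENNReal.ofReal (s ^ q * Real.exp (-(x * s ^ 2)))
      = ENNReal.ofReal (x ^ (-(q + 1) / 2) * (1 / 2) * Real.Gamma ((q + 1) / 2)) := by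
  rw [← ofReal_integral_eq_lintegral_ofReal]
  · congr 1
    have h := integral_rpow_mul_exp_neg_mul_rpow (p := 2) (q := q) (b := x) two_pos hq hx
    simp only [rpow_two] at h
    rw [show (∫ s in Ioi (0:ℝ), s ^ q * Real.exp (-(x * s ^ 2)))
        = ∫ s in Ioi (0:ℝ), s ^ q * Real.exp (-x * s ^ 2) by simp [neg_mul], h]
  · have h := integrableOn_rpow_mul_exp_neg_mul_rpow (p := 2) (s := q) (b := x) hq two_pos hx
    simp only [rpow_two] at h
    exact h.congr_fun (fun s _ => by simp [neg_mul]) measurableSet_Ioi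
  · filter_upwards [ae_restrict_mem measurableSet_Ioi] with s hs
    have : (0:ℝ) < s := hs
    positivity

/-- Gamma-type integral at the `lintegral` level. -/
lemma lint_gamma_aux {q b : ℝ} (hq : -1 < q) (hb : 0 < b) :
    ∫⁻ x in Ioi (0:ℝ), ENNReal.ofReal (x ^ q * Real.exp (-(b * x)))
      = ENNReal.ofReal (b ^ (-(q + 1)) * Real.Gamma (q + 1)) := by
  rw [← ofReal_integral_eq_lintegral_ofReal]
  · congr 1
    have h := integral_rpow_mul_exp_neg_mul_rpow (p := 1) (q := q) (b := b) one_pos hq hb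
    simp only [rpow_one] at h
    rw [show (∫ x in Ioi (0:ℝ), x ^ q * Real.exp (-(b * x)))
        = ∫ x in Ioi (0:ℝ), x ^ q * Real.exp (-b * x) by simp [neg_mul], h]
    rw [show (-(q+1) / 1 : ℝ) = -(q+1) by norm_num, show ((q+1) / 1 : ℝ) = q+1 by norm_num]
    ring
  · have h := integrableOn_rpow_mul_exp_neg_mul_rpow (p := 1) (s := q) (b := b) hq one_pos hb
    simp only [rpow_one] at h
    exact h.congr_fun (fun x _ => by simp [neg_mul]) measurableSet_Ioi
  · filter_upwards [ae_restrict_mem measurableSet_Ioi] with x hx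
    have : (0:ℝ) < x := hx
    positivity

/-- Laplace-transform trick: `s^{-p} · s/(s²+u²)` as an integral in `x`. -/
lemma exp_trick_aux {s : ℝ} (hs : 0 < s) (u p : ℝ) :
    ENNReal.ofReal (s ^ (-p) * (s / (s ^ 2 + u ^ 2)))
      = ∫⁻ x in Ioi (0:ℝ),
          ENNReal.ofReal (s ^ (1 - p) * (Real.exp (-(x * s ^ 2)) * Real.exp (-(x * u ^ 2)))) := by
  have hc : 0 < s ^ 2 + u ^ 2 := by positivity
  have key : ∀ x : ℝ, s ^ (1 - p) * (Real.exp (-(x * s ^ 2)) * Real.exp (-(x * u ^ 2)))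
      = s ^ (1 - p) * Real.exp (-((s ^ 2 + u ^ 2) * x)) := by
    intro x; rw [← Real.exp_add]; ring_nf
  simp only [key]
  have hnn : (0:ℝ) ≤ s ^ (1 - p) := rpow_nonneg hs.le _
  simp only [ENNReal.ofReal_mul hnn]
  rw [lintegral_const_mul' _ _ ENNReal.ofReal_ne_top, lint_exp_aux hc,
    ← ENNReal.ofReal_mul hnn]
  congr 1
  rw [show (1 - p : ℝ) = 1 + -p by ring, rpow_add hs, rpow_one, div_eq_mul_inv]
  ring

/-- The key integral for `u > 0`. -/
lemma lint_I_pos {p u : ℝ} (hp0 : 0 < p) (hp2 : p < 2) (hu : 0 < u) :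
    ∫⁻ s in Ioi (0:ℝ), ENNReal.ofReal (s ^ (-p) * (s / (s ^ 2 + u ^ 2)))
      = ENNReal.ofReal (u ^ (-p) * (Real.pi / (2 * Real.sin (Real.pi * p / 2)))) := by
  have hmeas : AEMeasurable (Function.uncurry fun (s x : ℝ) =>
      ENNReal.ofReal (s ^ (1 - p) * (Real.exp (-(x * s ^ 2)) * Real.exp (-(x * u ^ 2)))))
      ((volume.restrict (Ioi (0:ℝ))).prod (volume.restrict (Ioi (0:ℝ)))) := by
    apply Measurable.aemeasurable
    apply Measurable.ennreal_ofReal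
    fun_prop
  calc
    ∫⁻ s in Ioi (0:ℝ), ENNReal.ofReal (s ^ (-p) * (s / (s ^ 2 + u ^ 2)))
      = ∫⁻ s in Ioi (0:ℝ), ∫⁻ x in Ioi (0:ℝ),
          ENNReal.ofReal (s ^ (1 - p) * (Real.exp (-(x * s ^ 2)) * Real.exp (-(x * u ^ 2)))) := by
        refine setLIntegral_congr_fun measurableSet_Ioi ?_
        exact fun s hs => exp_trick_aux hs u p
    _ = ∫⁻ x in Ioi (0:ℝ), ∫⁻ s in Ioi (0:ℝ),
          ENNReal.ofReal (s ^ (1 - p) * (Real.exp (-(x * s ^ 2)) * Real.exp (-(x * u ^ 2)))) :=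
        lintegral_lintegral_swap hmeas
    _ = ∫⁻ x in Ioi (0:ℝ), ENNReal.ofReal (Real.exp (-(x * u ^ 2)))
          * ENNReal.ofReal (x ^ ((p - 2) / 2) * (1 / 2) * Real.Gamma ((2 - p) / 2)) := by
        refine setLIntegral_congr_fun measurableSet_Ioi ?_
        intro x hx
        have hx' : (0:ℝ) < x := hx
        have key : ∀ s : ℝ, s ^ (1 - p) * (Real.exp (-(x * s ^ 2)) * Real.exp (-(x * u ^ 2)))
            = Real.exp (-(x * u ^ 2)) * (s ^ (1 - p) * Real.exp (-(x * s ^ 2))) := by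
          intro s; ring
        simp only [key, ENNReal.ofReal_mul (Real.exp_pos _).le]
        rw [lintegral_const_mul' _ _ ENNReal.ofReal_ne_top,
          lint_gauss_aux (by linarith : (-1:ℝ) < 1 - p) hx']
        congr 2 <;> ring
    _ = ENNReal.ofReal ((1 / 2) * Real.Gamma ((2 - p) / 2))
          * ∫⁻ x in Ioi (0:ℝ), ENNReal.ofReal (x ^ ((p - 2) / 2) * Real.exp (-(u ^ 2 * x))) := by
        rw [← lintegral_const_mul' _ _ ENNReal.ofReal_ne_top]
        refine setLIntegral_congr_fun measurableSet_Ioi ?_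
        intro x hx; beta_reduce
        have hΓnn : (0:ℝ) ≤ (1/2) * Real.Gamma ((2 - p) / 2) :=
          mul_nonneg (by norm_num) (Real.Gamma_nonneg_of_nonneg (by linarith))
        rw [← ENNReal.ofReal_mul (Real.exp_pos _).le, ← ENNReal.ofReal_mul hΓnn]
        congr 1
        rw [show x * u ^ 2 = u ^ 2 * x from mul_comm _ _]
        ring
    _ = ENNReal.ofReal ((1 / 2) * Real.Gamma ((2 - p) / 2))
          * ENNReal.ofReal ((u ^ 2) ^ (-((p - 2) / 2 + 1)) * Real.Gamma ((p - 2) / 2 + 1)) := by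
        rw [lint_gamma_aux (by linarith : (-1:ℝ) < (p - 2) / 2) (by positivity)]
    _ = ENNReal.ofReal (u ^ (-p) * (Real.pi / (2 * Real.sin (Real.pi * p / 2)))) := by
        have hΓnn : (0:ℝ) ≤ (1/2) * Real.Gamma ((2 - p) / 2) :=
          mul_nonneg (by norm_num) (Real.Gamma_nonneg_of_nonneg (by linarith))
        rw [← ENNReal.ofReal_mul hΓnn]
        congr 1
        have e1 : ((u ^ 2 : ℝ)) ^ (-((p - 2) / 2 + 1)) = u ^ (-p) := by
          rw [← Real.rpow_natCast u 2, ← Real.rpow_mul hu.le]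
          congr 1
          push_cast; ring
        have e2 : Real.Gamma ((p - 2) / 2 + 1) * Real.Gamma ((2 - p) / 2)
            = Real.pi / Real.sin (Real.pi * p / 2) := by
          have h := Real.Gamma_mul_Gamma_one_sub (p / 2)
          rw [show ((p - 2) / 2 + 1 : ℝ) = p / 2 by ring, show ((2 - p) / 2 : ℝ) = 1 - p / 2 by ring,
            h, mul_div_assoc]
        rw [e1, show (1 / 2 : ℝ) * Real.Gamma ((2 - p) / 2) * ((u ^ (-p)) * Real.Gamma ((p - 2) / 2 + 1))
            = u ^ (-p) * ((Real.Gamma ((p - 2) / 2 + 1) * Real.Gamma ((2 - p) / 2)) / 2) by ring, e2,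
          div_div, mul_comm (Real.sin (Real.pi * p / 2)) 2]

/-- The key integral diverges for `u = 0`. -/
lemma lint_I_zero {p : ℝ} (hp0 : 0 < p) :
    ∫⁻ s in Ioi (0:ℝ), ENNReal.ofReal (s ^ (-p) * (s / (s ^ 2 + (0:ℝ) ^ 2))) = ⊤ := by
  have hcongr : ∫⁻ s in Ioi (0:ℝ), ENNReal.ofReal (s ^ (-p) * (s / (s ^ 2 + (0:ℝ) ^ 2)))
      = ∫⁻ s in Ioi (0:ℝ), ENNReal.ofReal (s ^ (-p - 1)) := by
    refine setLIntegral_congr_fun measurableSet_Ioi ?_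
    intro s hs; beta_reduce
    have hs' : (0:ℝ) < s := hs
    congr 1
    rw [show (0:ℝ) ^ 2 = 0 by norm_num, add_zero, pow_two,
      show s / (s * s) = s⁻¹ by field_simp, ← rpow_neg_one s, ← rpow_add hs']
    congr 1 <;> ring
  rw [hcongr]
  by_contra h
  have hfin : ∫⁻ s in Ioi (0:ℝ), ENNReal.ofReal (s ^ (-p - 1)) < ⊤ := lt_top_iff_ne_top.2 h
  have hnn : 0 ≤ᵐ[volume.restrict (Ioi (0:ℝ))] fun s : ℝ => s ^ (-p - 1) := by
    filter_upwards [ae_restrict_mem measurableSet_Ioi] with s hs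
    exact rpow_nonneg (le_of_lt hs) _
  have hint : IntegrableOn (fun s : ℝ => s ^ (-p - 1)) (Ioi 0) := by
    refine ⟨(Measurable.aestronglyMeasurable (by fun_prop)), ?_⟩
    rwa [hasFiniteIntegral_iff_ofReal hnn]
  exact not_integrableOn_Ioi_rpow (-p - 1) hint

theorem stmt8 (μ : Measure ℝ) [IsProbabilityMeasure μ] (hμ : μ (Iio 0) = 0)
    (p : ℝ) (hp0 : 0 < p) (hp2 : p < 2) :
    ∫⁻ u, ENNReal.ofReal u ^ (-p) ∂μ
      = ENNReal.ofReal (2 / Real.pi * Real.sin (Real.pi * p / 2)) *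
        ∫⁻ s in Ioi (0 : ℝ),
          ENNReal.ofReal (s ^ (-p) * ∫ u, s / (s ^ 2 + u ^ 2) ∂μ) := by
  have hπ := Real.pi_pos
  have hsin : 0 < Real.sin (Real.pi * p / 2) :=
    sin_pos_of_pos_of_lt_pi (by positivity) (by nlinarith)
  have hc : 0 < 2 / Real.pi * Real.sin (Real.pi * p / 2) := by positivity
  -- Step 1: rewrite the inner Bochner integral as a lintegral
  have key : ∀ s : ℝ, s ∈ Ioi (0:ℝ) →
      ENNReal.ofReal (s ^ (-p) * ∫ u, s / (s ^ 2 + u ^ 2) ∂μ)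
        = ∫⁻ u, ENNReal.ofReal (s ^ (-p) * (s / (s ^ 2 + u ^ 2))) ∂μ := by
    intro s hs
    have hs' : (0:ℝ) < s := hs
    have hcont : Continuous fun u : ℝ => s / (s ^ 2 + u ^ 2) :=
      continuous_const.div (by continuity) (fun u => by positivity)
    have hint : Integrable (fun u : ℝ => s / (s ^ 2 + u ^ 2)) μ := by
      refine (integrable_const (s⁻¹)).mono' hcont.aestronglyMeasurable ?_
      filter_upwards with u
      rw [Real.norm_eq_abs, abs_of_nonneg (by positivity)]
      rw [div_le_iff₀ (by positivity)]
      have h1 : s⁻¹ * s ^ 2 = s := by field_simp [pow_two]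
      nlinarith [sq_nonneg u, inv_pos.2 hs']
    have hnn : 0 ≤ᵐ[μ] fun u : ℝ => s / (s ^ 2 + u ^ 2) := by
      filter_upwards with u; positivity
    rw [ENNReal.ofReal_mul (rpow_nonneg hs'.le _),
      ofReal_integral_eq_lintegral_ofReal hint hnn,
      ← lintegral_const_mul' _ _ ENNReal.ofReal_ne_top]
    refine lintegral_congr fun u => ?_
    rw [← ENNReal.ofReal_mul (rpow_nonneg hs'.le _)]
  rw [setLIntegral_congr_fun measurableSet_Ioi key]
  -- Step 2: Tonelli
  have hmeas : AEMeasurable (Function.uncurry fun (s u : ℝ) =>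
      ENNReal.ofReal (s ^ (-p) * (s / (s ^ 2 + u ^ 2))))
      ((volume.restrict (Ioi (0:ℝ))).prod μ) := by
    apply Measurable.aemeasurable
    apply Measurable.ennreal_ofReal
    fun_prop
  rw [lintegral_lintegral_swap hmeas]
  -- Step 3: pointwise evaluation
  rw [← lintegral_const_mul' _ _ ENNReal.ofReal_ne_top]
  refine lintegral_congr_ae ?_
  have hae : ∀ᵐ u ∂μ, 0 ≤ u := by
    rw [ae_iff]
    convert hμ using 2
    ext u; simp [not_le]
  filter_upwards [hae] with u hu
  rcases eq_or_lt_of_le hu with h0 | h0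
  · rw [← h0, lint_I_zero hp0, ENNReal.mul_top (ENNReal.ofReal_pos.2 hc).ne',
      ENNReal.ofReal_zero, ENNReal.zero_rpow_of_neg (by linarith)]
  · rw [lint_I_pos hp0 hp2 h0, ← ENNReal.ofReal_mul hc.le,
      show (2 / Real.pi * Real.sin (Real.pi * p / 2)) *
          (u ^ (-p) * (Real.pi / (2 * Real.sin (Real.pi * p / 2)))) = u ^ (-p) by
        field_simp,
      ENNReal.ofReal_rpow_of_pos h0]
end

section
/- Let μ be the probability measure on (0,∞) with density (1/π)·1/(√t·(1+t)) with respect to Lebesgue measure. Then μ is indeed a probability measure, and its Stieltjes transform satisfies G_μ(λ) = ∫₀^∞ 1/(λ−t) dμ(t) = 1/(λ − √(−λ)) for all λ < 0, where √(−λ) denotes the positive square root of −λ. -/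
open MeasureTheory Set Real Filter

lemma intOn1 : IntegrableOn (fun x : ℝ => (1 + x^2)⁻¹) (Ioi 0) :=
  integrable_inv_one_add_sq.integrableOn

lemma intOnA {a : ℝ} (ha : 0 < a) :
    IntegrableOn (fun x : ℝ => (a^2 + x^2)⁻¹) (Ioi 0) := by
  have h1 : Integrable (fun x : ℝ => (1 + (a⁻¹ * x)^2)⁻¹) :=
    integrable_inv_one_add_sq.comp_mul_left' (inv_ne_zero ha.ne')
  have h2 : Integrable (fun x : ℝ => a⁻¹^2 * (1 + (a⁻¹ * x)^2)⁻¹) := h1.const_mul _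
  have : (fun x : ℝ => (a^2 + x^2)⁻¹) = fun x : ℝ => a⁻¹^2 * (1 + (a⁻¹ * x)^2)⁻¹ := by
    funext x
    have h2 : a^2 + x^2 ≠ 0 := by positivity
    field_simp
  rw [this]
  exact h2.integrableOn

lemma intValA {a : ℝ} (ha : 0 < a) :
    ∫ x in Ioi (0:ℝ), (a^2 + x^2)⁻¹ = π / (2 * a) := by
  have h := integral_comp_mul_left_Ioi (fun x : ℝ => (1 + x^2)⁻¹) 0 (inv_pos.mpr ha)
  simp only [mul_zero, integral_Ioi_inv_one_add_sq, arctan_zero, sub_zero, inv_inv,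
    smul_eq_mul] at h
  have key : ∫ x in Ioi (0:ℝ), (a^2 + x^2)⁻¹
      = ∫ x in Ioi (0:ℝ), a⁻¹^2 * (1 + (a⁻¹ * x)^2)⁻¹ := by
    refine setIntegral_congr_fun measurableSet_Ioi (fun x _ => ?_)
    have h2 : a^2 + x^2 ≠ 0 := by positivity
    field_simp
  rw [key, integral_const_mul, h]
  field_simp

lemma intOnSq : IntegrableOn (fun x : ℝ => ((1 + x^2)^2)⁻¹) (Ioi 0) := by
  refine intOn1.mono' ?_ ?_
  · refine Measurable.aestronglyMeasurable ?_
    exact (measurable_const.add (measurable_id.pow_const 2)).pow_const 2 |>.inv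
  · refine Filter.Eventually.of_forall (fun x => ?_)
    have h1 : (0:ℝ) < 1 + x^2 := by positivity
    rw [Real.norm_eq_abs, abs_of_pos (by positivity)]
    rw [inv_le_inv₀ (by positivity) h1]
    nlinarith

lemma intValSq : ∫ x in Ioi (0:ℝ), ((1 + x^2)^2)⁻¹ = π / 4 := by
  have hderiv : ∀ x ∈ Ici (0:ℝ),
      HasDerivAt (fun x : ℝ => (arctan x + x / (1 + x^2)) / 2) (((1 + x^2)^2)⁻¹) x := by
    intro x _
    have h1 : (0:ℝ) < 1 + x^2 := by positivity
    have hd : HasDerivAt (fun x : ℝ => (arctan x + x / (1 + x^2)) / 2)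
        ((1 / (1 + x^2) + ((1 * (1 + x^2) - x * (2 * x)) / (1 + x^2)^2)) / 2) x := by
      refine HasDerivAt.div_const ?_ 2
      refine (hasDerivAt_arctan x).add ?_
      have := (hasDerivAt_id x).div ((hasDerivAt_const x 1).add
        ((hasDerivAt_pow 2 x))) h1.ne'
      exact this.congr_deriv (by norm_num)
    convert hd using 1
    field_simp
    ring
  have htop : Tendsto (fun x : ℝ => (arctan x + x / (1 + x^2)) / 2) atTop (nhds (π/4)) := by
    have h1 : Tendsto arctan atTop (nhds (π/2)) :=
      tendsto_nhds_of_tendsto_nhdsWithin tendsto_arctan_atTop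
    have h2 : Tendsto (fun x : ℝ => x / (1 + x^2)) atTop (nhds 0) := by
      apply squeeze_zero' (g := fun x : ℝ => x⁻¹)
      · filter_upwards [eventually_ge_atTop (0:ℝ)] with x hx
        positivity
      · filter_upwards [eventually_ge_atTop (1:ℝ)] with x hx
        have hx0 : (0:ℝ) < x := by linarith
        rw [div_le_iff₀ (by positivity), inv_mul_eq_div, le_div_iff₀ hx0]
        nlinarith
      · exact tendsto_inv_atTop_zero
    have := (h1.add h2).div_const 2
    rw [add_zero] at this
    convert this using 2
    ring
  have := integral_Ioi_of_hasDerivAt_of_tendsto' hderiv intOnSq htop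
  simp at this
  rw [this]

lemma keyInt {a : ℝ} (ha : 0 < a) :
    ∫ x in Ioi (0:ℝ), (a^2 + x^2)⁻¹ * (1 + x^2)⁻¹ = π / (2 * a * (a + 1)) := by
  rcases eq_or_ne a 1 with rfl | hne
  · have : ∀ x ∈ Ioi (0:ℝ), ((1:ℝ)^2 + x^2)⁻¹ * (1 + x^2)⁻¹ = ((1 + x^2)^2)⁻¹ := by
      intro x _
      rw [one_pow, ← mul_inv, sq, sq]
    rw [setIntegral_congr_fun measurableSet_Ioi this, intValSq]
    norm_num
  · have hne2 : 1 - a^2 ≠ 0 := by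
      intro h
      apply hne
      nlinarith
    have hpt : ∀ x ∈ Ioi (0:ℝ), (a^2 + x^2)⁻¹ * (1 + x^2)⁻¹
        = (1 - a^2)⁻¹ * ((a^2 + x^2)⁻¹ - (1 + x^2)⁻¹) := by
      intro x _
      have h1 : a^2 + x^2 ≠ 0 := by positivity
      have h2 : (1:ℝ) + x^2 ≠ 0 := by positivity
      field_simp
      ring
    rw [setIntegral_congr_fun measurableSet_Ioi hpt, integral_const_mul,
      integral_sub (intOnA ha) intOn1, intValA ha]
    simp only [integral_Ioi_inv_one_add_sq, arctan_zero, sub_zero]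
    have h3 : a + 1 ≠ 0 := by positivity
    field_simp
    ring

theorem stmt17 :
    (∫ t in Ioi (0 : ℝ), (1 / Real.pi) * (1 / (Real.sqrt t * (1 + t))) = 1) ∧
    ∀ lam : ℝ, lam < 0 →
      ∫ t in Ioi (0 : ℝ),
          (1 / (lam - t)) * ((1 / Real.pi) * (1 / (Real.sqrt t * (1 + t))))
        = 1 / (lam - Real.sqrt (-lam)) := by
  constructor
  · rw [← integral_comp_rpow_Ioi_of_pos
      (g := fun t => (1 / Real.pi) * (1 / (Real.sqrt t * (1 + t)))) zero_lt_two]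
    have hpt : ∀ x ∈ Ioi (0:ℝ),
        (2 * x ^ ((2:ℝ) - 1)) • ((1 / Real.pi) * (1 / (Real.sqrt (x ^ (2:ℝ)) * (1 + x ^ (2:ℝ)))))
        = (2 / π) * (1 + x^2)⁻¹ := by
      intro x hx
      have hx0 : (0:ℝ) < x := hx
      rw [show ((2:ℝ) - 1) = 1 by norm_num, Real.rpow_one, Real.rpow_two,
        Real.sqrt_sq hx0.le, smul_eq_mul]
      have h1 : (1:ℝ) + x^2 ≠ 0 := by positivity
      field_simp
    rw [setIntegral_congr_fun measurableSet_Ioi hpt, integral_const_mul,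
      integral_Ioi_inv_one_add_sq]
    simp [Real.pi_ne_zero]
  · intro lam hlam
    set a := Real.sqrt (-lam) with ha_def
    have ha : 0 < a := Real.sqrt_pos.mpr (by linarith)
    have ha2 : a^2 = -lam := Real.sq_sqrt (by linarith)
    have hlam' : lam = -a^2 := by linarith
    rw [← integral_comp_rpow_Ioi_of_pos
      (g := fun t => (1 / (lam - t)) * ((1 / Real.pi) * (1 / (Real.sqrt t * (1 + t)))))
      zero_lt_two]
    have hpt : ∀ x ∈ Ioi (0:ℝ),
        (2 * x ^ ((2:ℝ) - 1)) • ((1 / (lam - x ^ (2:ℝ))) *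
          ((1 / Real.pi) * (1 / (Real.sqrt (x ^ (2:ℝ)) * (1 + x ^ (2:ℝ))))))
        = (-(2 / π)) * ((a^2 + x^2)⁻¹ * (1 + x^2)⁻¹) := by
      intro x hx
      have hx0 : (0:ℝ) < x := hx
      rw [show ((2:ℝ) - 1) = 1 by norm_num, Real.rpow_one, Real.rpow_two,
        Real.sqrt_sq hx0.le, smul_eq_mul, hlam']
      have h1 : (1:ℝ) + x^2 ≠ 0 := by positivity
      have h2 : a^2 + x^2 ≠ 0 := by positivity
      have h3 : -a^2 - x^2 ≠ 0 := by
        intro h; apply h2; linarith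
      field_simp
      ring
    rw [setIntegral_congr_fun measurableSet_Ioi hpt, integral_const_mul, keyInt ha]
    have h4 : a * (a + 1) ≠ 0 := by positivity
    rw [hlam']
    have h5 : -a^2 - a ≠ 0 := by
      intro h
      have : a * (a + 1) = 0 := by linarith
      exact h4 this
    have h6 : -1 - a ≠ 0 := by linarith
    field_simp
    ring_nf
    field_simp
    ring
end
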